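/- arXiv:1208.4749 — 8 statements merged into one kernel-verified Lean document; each statement's English description precedes it below -/
import Mathlib

section
/- For every finite slim semimodular lattice K, the number of meet-irreducible elements of K (elements u ≠ ⊤ such that u = a ⊓ b implies u = a or u = b) equals the length of K. -/
set_option linter.unusedSectionVars false

/-- `p` is join-irreducible: `p ≠ ⊥` and `p = a ⊔ b` implies `p = a` or `p = b`. -/
def JoinIrred {L : Type*} [Lattice L] [OrderBot L] (p : L) : Prop :=
  p ≠ ⊥ ∧ ∀ a b : L, p = a ⊔ b → p = a ∨ p = b

/-- `u` is meet-irreducible: `u ≠ ⊤` and `u = a ⊓ b` implies `u = a` or `u = b`. -/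
def MeetIrred {L : Type*} [Lattice L] [OrderTop L] (u : L) : Prop :=
  u ≠ ⊤ ∧ ∀ a b : L, u = a ⊓ b → u = a ∨ u = b

/-- A lattice is slim if its join-irreducible elements contain no three-element antichain. -/
def Slim (L : Type*) [Lattice L] [OrderBot L] : Prop :=
  ¬ ∃ a b c : L, JoinIrred a ∧ JoinIrred b ∧ JoinIrred c ∧
    ¬ a ≤ b ∧ ¬ b ≤ a ∧ ¬ a ≤ c ∧ ¬ c ≤ a ∧ ¬ b ≤ c ∧ ¬ c ≤ b

/-- A lattice is (upper) semimodular if `a ⊓ b ⋖ a` implies `b ⋖ a ⊔ b`. -/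
def Semimodular (L : Type*) [Lattice L] : Prop :=
  ∀ a b : L, a ⊓ b ⋖ a → b ⋖ a ⊔ b

/-- `L` has length `n`: there is a chain `x₀ < ⋯ < x_n` and no longer chain. -/
def HasLength (L : Type*) [Preorder L] (n : ℕ) : Prop :=
  (∃ x : Fin (n + 1) → L, StrictMono x) ∧
    ∀ (m : ℕ) (x : Fin (m + 1) → L), StrictMono x → m ≤ n

section AuxLemmas

variable {K : Type*} [Lattice K] [Fintype K] [BoundedOrder K]

/-- Every element not below `y` has a join-irreducible below it not below `y`. -/
lemma exists_joinIrred_le_not_le (y : K) :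
    ∀ x : K, ¬ x ≤ y → ∃ j : K, JoinIrred j ∧ j ≤ x ∧ ¬ j ≤ y := by
  have wf : WellFounded ((· < ·) : K → K → Prop) := wellFounded_lt
  intro x
  refine wf.induction (C := fun x => ¬ x ≤ y → ∃ j : K, JoinIrred j ∧ j ≤ x ∧ ¬ j ≤ y) x ?_
  intro x ih h
  by_cases hji : JoinIrred x
  · exact ⟨x, hji, le_refl x, h⟩
  · have hxbot : x ≠ ⊥ := by rintro rfl; exact h bot_le
    have : ¬ (∀ a b : K, x = a ⊔ b → x = a ∨ x = b) := by
      intro hall; exact hji ⟨hxbot, hall⟩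
    push_neg at this
    obtain ⟨s, t, hst, hxs, hxt⟩ := this
    have hs : s < x := lt_of_le_of_ne (hst ▸ le_sup_left) (fun hh => hxs hh.symm)
    have ht : t < x := lt_of_le_of_ne (hst ▸ le_sup_right) (fun hh => hxt hh.symm)
    by_cases hsy : s ≤ y
    · have hty : ¬ t ≤ y := by
        intro hty; exact h (hst ▸ sup_le hsy hty)
      obtain ⟨j, hj, hj1, hj2⟩ := ih t ht hty
      exact ⟨j, hj, hj1.trans ht.le, hj2⟩
    · obtain ⟨j, hj, hj1, hj2⟩ := ih s hs hsy
      exact ⟨j, hj, hj1.trans hs.le, hj2⟩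

/-- In a finite lattice, below any strict bound there is a cover. -/
lemma exists_covBy_le' {u v : K} (h : u < v) : ∃ c : K, u ⋖ c ∧ c ≤ v := by
  have wf : WellFounded ((· < ·) : K → K → Prop) := wellFounded_lt
  obtain ⟨c, hc, hmin⟩ := wf.has_min {w | u < w ∧ w ≤ v} ⟨v, h, le_refl v⟩
  refine ⟨c, ⟨hc.1, fun d hd1 hd2 => ?_⟩, hc.2⟩
  exact hmin d ⟨hd1, hd2.le.trans hc.2⟩ hd2

/-- A meet-irreducible element has a unique cover. -/
lemma meetIrred_unique_cover {u c d : K} (hu : MeetIrred u) (hc : u ⋖ c) (hd : u ⋖ d) :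
    c = d := by
  by_contra hne
  have h1 : c ⊓ d < c := by
    rcases lt_or_eq_of_le (inf_le_left : c ⊓ d ≤ c) with h | h
    · exact h
    · exfalso
      have hcd : c ≤ d := h ▸ inf_le_right
      rcases lt_or_eq_of_le hcd with h2 | h2
      · exact hd.2 hc.1 h2
      · exact hne h2
  have h2 : u ≤ c ⊓ d := le_inf hc.1.le hd.1.le
  have h3 : u = c ⊓ d := by
    rcases lt_or_eq_of_le h2 with h4 | h4
    · exact absurd h1 (hc.2 h4)
    · exact h4
  rcases hu.2 c d h3 with h | h
  · exact absurd h.symm hc.1.ne'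
  · exact absurd h.symm hd.1.ne'

/-- Conversely: unique covers (and not being top) give meet-irreducibility. -/
lemma meetIrred_of_unique_cover {u : K} (h1 : u ≠ ⊤)
    (h2 : ∀ c d : K, u ⋖ c → u ⋖ d → c = d) : MeetIrred u := by
  refine ⟨h1, fun s t hst => ?_⟩
  by_contra hcon
  push_neg at hcon
  obtain ⟨hs, ht⟩ := hcon
  have hus : u < s := lt_of_le_of_ne (hst ▸ inf_le_left) hs
  have hut : u < t := lt_of_le_of_ne (hst ▸ inf_le_right) ht
  obtain ⟨c, hc, hcs⟩ := exists_covBy_le' hus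
  obtain ⟨d, hd, hdt⟩ := exists_covBy_le' hut
  have : c = d := h2 c d hc hd
  subst this
  exact absurd (hst ▸ le_inf hcs hdt : c ≤ u) (not_le_of_gt hc.1)

/-- Everything strictly above a meet-irreducible is above its cover. -/
lemma meetIrred_cover_le {u c v : K} (hu : MeetIrred u) (hc : u ⋖ c) (hv : u < v) :
    c ≤ v := by
  obtain ⟨d, hd, hdv⟩ := exists_covBy_le' hv
  exact (meetIrred_unique_cover hu hc hd) ▸ hdv

end AuxLemmas
section AtomLemmas

variable {K : Type*} [Lattice K] [Fintype K] [BoundedOrder K]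

lemma exists_atom (h : (⊥ : K) ≠ ⊤) : ∃ a : K, ⊥ ⋖ a := by
  have wf : WellFounded ((· < ·) : K → K → Prop) := wellFounded_lt
  obtain ⟨a, ha, hmin⟩ := wf.has_min {w : K | ⊥ < w} ⟨⊤, bot_lt_iff_ne_bot.mpr (Ne.symm h)⟩
  exact ⟨a, ha, fun d hd1 hd2 => hmin d hd1 hd2⟩

variable {a : K} (ha : ⊥ ⋖ a)

include ha

lemma atom_le_cases {c : K} (h : c ≤ a) : c = ⊥ ∨ c = a := by
  rcases lt_or_eq_of_le h with h1 | h1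
  · left
    by_contra hne
    exact ha.2 (bot_lt_iff_ne_bot.mpr hne) h1
  · right; exact h1

lemma atom_inf_eq_bot {u : K} (h : ¬ a ≤ u) : a ⊓ u = ⊥ := by
  rcases atom_le_cases ha (inf_le_left : a ⊓ u ≤ a) with h1 | h1
  · exact h1
  · exact absurd (h1 ▸ inf_le_right : a ≤ u) h

lemma atom_joinIrred : JoinIrred a := by
  refine ⟨ha.1.ne', fun s t hst => ?_⟩
  rcases atom_le_cases ha (hst ▸ le_sup_left : s ≤ a) with h1 | h1
  · rcases atom_le_cases ha (hst ▸ le_sup_right : t ≤ a) with h2 | h2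
    · exfalso; rw [h1, h2, sup_idem] at hst; exact ha.1.ne' hst
    · right; exact h2.symm
  · left; exact h1.symm

/-- With semimodularity: joining an atom to an element not above it gives a cover. -/
lemma atom_sup_covBy (hM : Semimodular K) {u : K} (h : ¬ a ≤ u) : u ⋖ u ⊔ a := by
  have h1 : a ⊓ u ⋖ a := by rw [atom_inf_eq_bot ha h]; exact ha
  have := hM a u h1
  rwa [sup_comm] at this

/-- Main lemma: there is exactly one meet-irreducible element not above a given atom. -/
lemma existsUnique_meetIrred_not_above (hS : Slim K) (hM : Semimodular K) :
    ∃! u : K, MeetIrred u ∧ ¬ a ≤ u := by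
  have wf : WellFounded ((· > ·) : K → K → Prop) := wellFounded_gt
  obtain ⟨u, hu, hmax⟩ := wf.has_min {w : K | ¬ a ≤ w} ⟨⊥, fun hh => ha.1.ne' (le_bot_iff.mp hh)⟩
  have humi : MeetIrred u := by
    refine ⟨fun hh => hu (hh ▸ le_top), fun s t hst => ?_⟩
    by_contra hcon
    push_neg at hcon
    have hs : u < s := lt_of_le_of_ne (hst ▸ inf_le_left) hcon.1
    have ht : u < t := lt_of_le_of_ne (hst ▸ inf_le_right) hcon.2
    have has : a ≤ s := by by_contra hh; exact hmax s hh hs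
    have hat : a ≤ t := by by_contra hh; exact hmax t hh ht
    exact hu (hst ▸ le_inf has hat)
  refine ⟨u, ⟨humi, hu⟩, ?_⟩
  -- uniqueness
  have key : ∀ v w : K, MeetIrred v → ¬ a ≤ v → MeetIrred w → ¬ a ≤ w → ¬ v < w := by
    intro v w hv hav hw haw hvw
    have hcov : v ⋖ v ⊔ a := atom_sup_covBy ha hM hav
    have : v ⊔ a ≤ w := meetIrred_cover_le hv hcov hvw
    exact haw (le_sup_right.trans this)
  intro v ⟨hv, hav⟩
  by_contra hne
  -- v and u are incomparable
  have h1 : ¬ v ≤ u := fun hh => (key v u hv hav humi hu) (lt_of_le_of_ne hh hne)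
  have h2 : ¬ u ≤ v := fun hh => (key u v humi hu hv hav) (lt_of_le_of_ne hh (Ne.symm hne))
  obtain ⟨j₁, hj₁, hj₁v, hj₁u⟩ := exists_joinIrred_le_not_le u v h1
  obtain ⟨j₂, hj₂, hj₂u, hj₂v⟩ := exists_joinIrred_le_not_le v u h2
  refine hS ⟨a, j₁, j₂, atom_joinIrred ha, hj₁, hj₂, ?_, ?_, ?_, ?_, ?_, ?_⟩
  · exact fun hh => hav (hh.trans hj₁v)
  · intro hh
    rcases atom_le_cases ha hh with h3 | h3
    · exact hj₁.1 h3
    · exact hav (h3 ▸ hj₁v)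
  · exact fun hh => hu (hh.trans hj₂u)
  · intro hh
    rcases atom_le_cases ha hh with h3 | h3
    · exact hj₂.1 h3
    · exact hu (h3 ▸ hj₂u)
  · exact fun hh => hj₁u (hh.trans hj₂u)
  · exact fun hh => hj₂v (hh.trans hj₁v)

end AtomLemmas
section Transfer

variable {K : Type*} [Lattice K] [Fintype K] [BoundedOrder K] {a : K}

lemma Ici_coe_sup (x y : Set.Ici a) : ((x ⊔ y : Set.Ici a) : K) = (x : K) ⊔ (y : K) := rfl

lemma Ici_coe_inf (x y : Set.Ici a) : ((x ⊓ y : Set.Ici a) : K) = (x : K) ⊓ (y : K) := rfl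

lemma Ici_covBy_iff {x y : Set.Ici a} : x ⋖ y ↔ (x : K) ⋖ (y : K) := by
  constructor
  · rintro ⟨h1, h2⟩
    refine ⟨Subtype.coe_lt_coe.mpr h1, fun c hc1 hc2 => ?_⟩
    have hca : c ∈ Set.Ici a := Set.mem_Ici.mpr (x.2.trans hc1.le)
    have hx1 : x < (⟨c, hca⟩ : Set.Ici a) := (Subtype.coe_lt_coe (p := (· ∈ Set.Ici a))).mp hc1
    have hx2 : (⟨c, hca⟩ : Set.Ici a) < y := (Subtype.coe_lt_coe (p := (· ∈ Set.Ici a))).mp hc2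
    exact h2 hx1 hx2
  · rintro ⟨h1, h2⟩
    exact ⟨Subtype.coe_lt_coe.mp h1, fun c hc1 hc2 =>
      h2 (Subtype.coe_lt_coe.mpr hc1) (Subtype.coe_lt_coe.mpr hc2)⟩

lemma Ici_semimodular (hM : Semimodular K) : Semimodular (Set.Ici a) := by
  intro x y h
  rw [Ici_covBy_iff, Ici_coe_inf] at h
  rw [Ici_covBy_iff, Ici_coe_sup]
  exact hM _ _ h

/-- Each join-irreducible of the interval `[a, ⊤]` is of the form `j ⊔ a` with `j`
join-irreducible in `K`. -/
lemma Ici_joinIrred_decomp (x : Set.Ici a) (hx : JoinIrred x) :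
    ∃ j : K, JoinIrred j ∧ (x : K) = j ⊔ a := by
  have wf : WellFounded ((· < ·) : K → K → Prop) := wellFounded_lt
  have key : ∀ s : K, (⟨s ⊔ a, Set.mem_Ici.mpr le_sup_right⟩ : Set.Ici a) = x →
      ∃ j : K, JoinIrred j ∧ (x : K) = j ⊔ a := by
    intro s
    refine wf.induction
      (C := fun s => (⟨s ⊔ a, Set.mem_Ici.mpr le_sup_right⟩ : Set.Ici a) = x →
        ∃ j : K, JoinIrred j ∧ (x : K) = j ⊔ a) s ?_
    intro s ih hs
    by_cases hji : JoinIrred s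
    · exact ⟨s, hji, by rw [← hs]⟩
    · by_cases hsa : s ≤ a
      · exfalso
        apply hx.1
        have : (x : K) = a := by
          rw [← hs]
          exact sup_eq_right.mpr hsa
        exact Subtype.ext this
      · have hsbot : s ≠ ⊥ := by rintro rfl; exact hsa bot_le
        have : ¬ (∀ u v : K, s = u ⊔ v → s = u ∨ s = v) := fun hall => hji ⟨hsbot, hall⟩
        push_neg at this
        obtain ⟨u, v, huv, hu, hv⟩ := this
        have hus : u < s := lt_of_le_of_ne (huv ▸ le_sup_left) (fun hh => hu hh.symm)
        have hvs : v < s := lt_of_le_of_ne (huv ▸ le_sup_right) (fun hh => hv hh.symm)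
        have hdec : x = (⟨u ⊔ a, Set.mem_Ici.mpr le_sup_right⟩ : Set.Ici a) ⊔
            (⟨v ⊔ a, Set.mem_Ici.mpr le_sup_right⟩ : Set.Ici a) := by
          apply Subtype.ext
          rw [Ici_coe_sup, ← hs]
          show s ⊔ a = (u ⊔ a) ⊔ (v ⊔ a)
          rw [huv]
          rw [sup_sup_sup_comm, sup_idem]
        rcases hx.2 _ _ hdec with h | h
        · exact ih u hus h.symm
        · exact ih v hvs h.symm
  refine key (x : K) ?_
  apply Subtype.ext
  exact sup_eq_left.mpr x.2

lemma Ici_slim (hS : Slim K) : Slim (Set.Ici a) := by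
  rintro ⟨p, q, r, hp, hq, hr, h1, h2, h3, h4, h5, h6⟩
  obtain ⟨j₁, hj₁, he₁⟩ := Ici_joinIrred_decomp p hp
  obtain ⟨j₂, hj₂, he₂⟩ := Ici_joinIrred_decomp q hq
  obtain ⟨j₃, hj₃, he₃⟩ := Ici_joinIrred_decomp r hr
  have lem : ∀ (s t : Set.Ici a) (js jt : K), (s : K) = js ⊔ a → (t : K) = jt ⊔ a →
      ¬ (s : Set.Ici a) ≤ t → ¬ js ≤ jt := by
    intro s t js jt hjs hjt hst hle
    apply hst
    rw [← Subtype.coe_le_coe, hjs, hjt]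
    exact sup_le_sup_right hle a
  exact hS ⟨j₁, j₂, j₃, hj₁, hj₂, hj₃,
    lem p q j₁ j₂ he₁ he₂ h1, lem q p j₂ j₁ he₂ he₁ h2,
    lem p r j₁ j₃ he₁ he₃ h3, lem r p j₃ j₁ he₃ he₁ h4,
    lem q r j₂ j₃ he₂ he₃ h5, lem r q j₃ j₂ he₃ he₂ h6⟩

lemma Ici_meetIrred_iff (ha : ⊥ ⋖ a) {u : K} (hu : a ≤ u) :
    MeetIrred u ↔ MeetIrred (⟨u, Set.mem_Ici.mpr hu⟩ : Set.Ici a) := by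
  haveI : Fintype (Set.Ici a) := Fintype.ofFinite _
  have hne : u ≠ ⊤ ↔ (⟨u, Set.mem_Ici.mpr hu⟩ : Set.Ici a) ≠ ⊤ := by
    constructor
    · intro h hh
      exact h (congrArg Subtype.val hh)
    · intro h hh
      exact h (Subtype.ext hh)
  constructor
  · intro h
    refine ⟨hne.mp h.1, fun s t hst => ?_⟩
    rcases h.2 s t (congrArg Subtype.val hst) with hh | hh
    · exact Or.inl (Subtype.ext hh)
    · exact Or.inr (Subtype.ext hh)
  · intro h
    refine meetIrred_of_unique_cover (hne.mpr h.1) (fun c d hc hd => ?_)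
    have hca : c ∈ Set.Ici a := Set.mem_Ici.mpr (hu.trans hc.1.le)
    have hda : d ∈ Set.Ici a := Set.mem_Ici.mpr (hu.trans hd.1.le)
    have h1 : (⟨u, Set.mem_Ici.mpr hu⟩ : Set.Ici a) ⋖ ⟨c, hca⟩ :=
      (Ici_covBy_iff (x := ⟨u, Set.mem_Ici.mpr hu⟩) (y := ⟨c, hca⟩)).mpr hc
    have h2 : (⟨u, Set.mem_Ici.mpr hu⟩ : Set.Ici a) ⋖ ⟨d, hda⟩ :=
      (Ici_covBy_iff (x := ⟨u, Set.mem_Ici.mpr hu⟩) (y := ⟨d, hda⟩)).mpr hd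
    exact congrArg Subtype.val (meetIrred_unique_cover h h1 h2)

end Transfer
section Length

variable {K : Type*} [Lattice K] [Fintype K] [BoundedOrder K] {a : K}

lemma hasLength_Ici (ha : ⊥ ⋖ a) (hM : Semimodular K) {n : ℕ}
    (hlen : HasLength K (n + 1)) : HasLength (Set.Ici a) n := by
  obtain ⟨⟨x, hx⟩, hmax⟩ := hlen
  -- bound on ℕ-indexed chains in K
  have bound : ∀ (m : ℕ) (g : ℕ → K), (∀ i < m, g i < g (i + 1)) → m ≤ n + 1 := by
    intro m g hg
    refine hmax m (fun i => g i.val) (Fin.strictMono_iff_lt_succ.mpr ?_)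
    intro i
    simpa using hg i.val i.isLt
  set g : ℕ → K := fun i => x ⟨min i (n + 1), by omega⟩ with hgdef
  have hgmono : Monotone g := by
    intro i j hij
    exact hx.monotone (by simp [Fin.le_def]; omega)
  have hgstep : ∀ i ≤ n, g i < g (i + 1) := by
    intro i hi
    exact hx (by simp [Fin.lt_def]; omega)
  have hg0 : g 0 = ⊥ := by
    by_contra h0
    have := bound (n + 2) (fun i => if i = 0 then ⊥ else g (i - 1)) ?_
    · omega
    intro i hi
    rcases Nat.eq_zero_or_pos i with h | h
    · subst h
      simp only [if_pos rfl, if_neg (by omega : ¬ (0 + 1 = 0))]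
      have h01 : (0 : ℕ) + 1 - 1 = 0 := rfl
      rw [h01]
      exact bot_lt_iff_ne_bot.mpr h0
    · simp only [if_neg (by omega : ¬ i = 0), if_neg (by omega : ¬ (i + 1 = 0))]
      have := hgstep (i - 1) (by omega)
      rwa [Nat.sub_add_cancel (by omega)] at this
  have hgtop : g (n + 1) = ⊤ := by
    by_contra h0
    have := bound (n + 2) (fun i => if i ≤ n + 1 then g i else ⊤) ?_
    · omega
    intro i hi
    by_cases h : i + 1 ≤ n + 1
    · simp only [if_pos (by omega : i ≤ n + 1), if_pos h]
      exact hgstep i (by omega)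
    · have hieq : i = n + 1 := by omega
      subst hieq
      simp only [if_pos (le_refl (n + 1)), if_neg h]
      exact lt_top_iff_ne_top.mpr h0
  have hcov : ∀ i ≤ n, g i ⋖ g (i + 1) := by
    intro i hi
    refine ⟨hgstep i hi, fun c h1 h2 => ?_⟩
    have := bound (n + 2)
      (fun m => if m ≤ i then g m else if m = i + 1 then c else g (m - 1)) ?_
    · omega
    intro m hm
    by_cases hm1 : m + 1 ≤ i
    · simp only [if_pos (by omega : m ≤ i), if_pos hm1]
      exact hgstep m (by omega)
    · by_cases hm2 : m ≤ i
      · have : m = i := by omega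
        subst this
        simp only [if_pos hm2, if_neg hm1, if_pos rfl]
        exact h1
      · by_cases hm3 : m = i + 1
        · subst hm3
          simp only [if_neg hm2, if_pos rfl, if_neg (by omega : ¬ (i + 1 + 1 ≤ i)),
            if_neg (by omega : ¬ (i + 1 + 1 = i + 1))]
          exact h2
        · simp only [if_neg hm2, if_neg hm3, if_neg (by omega : ¬ (m + 1 ≤ i)),
            if_neg (by omega : ¬ (m + 1 = i + 1))]
          have := hgstep (m - 1) (by omega)
          rw [Nat.sub_add_cancel (by omega)] at this
          have heq : m + 1 - 1 = m := by omega
          rw [heq]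
          exact this
  -- flat steps of the chain (g · ⊔ a)
  have flat_a_le : ∀ i ≤ n, g i ⊔ a = g (i + 1) ⊔ a → a ≤ g (i + 1) := by
    intro i hi hf
    have hai : ¬ a ≤ g i := by
      intro hh
      have h1 : g (i + 1) ≤ g i := by
        calc g (i + 1) ≤ g (i + 1) ⊔ a := le_sup_left
        _ = g i ⊔ a := hf.symm
        _ = g i := sup_eq_left.mpr hh
      exact absurd h1 (hgstep i hi).not_ge
    have hcv : g i ⋖ g i ⊔ a := atom_sup_covBy ha hM hai
    have h2 : g (i + 1) ≤ g i ⊔ a := le_sup_left.trans (le_of_eq hf.symm)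
    have h3 : g (i + 1) = g i ⊔ a := by
      rcases lt_or_eq_of_le h2 with h4 | h4
      · exact absurd h4 (hcv.2 (hgstep i hi))
      · exact h4
    rw [h3]
    exact le_sup_right
  have flat_unique : ∀ i j, i ≤ n → j ≤ n → g i ⊔ a = g (i + 1) ⊔ a →
      g j ⊔ a = g (j + 1) ⊔ a → i = j := by
    have key : ∀ i j, i < j → i ≤ n → j ≤ n → g i ⊔ a = g (i + 1) ⊔ a →
        g j ⊔ a = g (j + 1) ⊔ a → False := by
      intro i j hij hi hj hfi hfj
      have h1 : a ≤ g j := (flat_a_le i hi hfi).trans (hgmono (by omega))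
      have h2 : g (j + 1) ≤ g j := by
        calc g (j + 1) ≤ g (j + 1) ⊔ a := le_sup_left
        _ = g j ⊔ a := hfj.symm
        _ = g j := sup_eq_left.mpr h1
      exact absurd h2 (hgstep j hj).not_ge
    intro i j hi hj hfi hfj
    rcases lt_trichotomy i j with h | h | h
    · exact absurd (key i j h hi hj hfi hfj) (by simp)
    · exact h
    · exact absurd (key j i h hj hi hfj hfi) (by simp)
  have flat_ex : ∃ e, e ≤ n ∧ g e ⊔ a = g (e + 1) ⊔ a := by
    by_contra h0
    push_neg at h0
    have := bound (n + 2) (fun i => if i = 0 then ⊥ else g (i - 1) ⊔ a) ?_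
    · omega
    intro i hi
    rcases Nat.eq_zero_or_pos i with h | h
    · subst h
      simp only [if_pos rfl, if_neg (by omega : ¬ (0 + 1 = 0))]
      exact bot_lt_iff_ne_bot.mpr (fun hh => ha.1.ne'
        (le_bot_iff.mp (hh ▸ le_sup_right : a ≤ (⊥ : K))))
    · simp only [if_neg (by omega : ¬ i = 0), if_neg (by omega : ¬ (i + 1 = 0))]
      have hle : g (i - 1) ⊔ a ≤ g i ⊔ a := sup_le_sup_right (hgmono (by omega)) a
      have hne : g (i - 1) ⊔ a ≠ g i ⊔ a := by
        have := h0 (i - 1) (by omega)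
        rwa [Nat.sub_add_cancel (by omega)] at this
      have heq : i + 1 - 1 = i := by omega
      rw [heq]
      exact lt_of_le_of_ne hle hne
  obtain ⟨e, he, hef⟩ := flat_ex
  have nonflat_lt : ∀ m ≤ n, m ≠ e → g m ⊔ a < g (m + 1) ⊔ a := by
    intro m hm hne
    refine lt_of_le_of_ne (sup_le_sup_right (hgmono (by omega)) a) ?_
    intro hfl
    exact hne (flat_unique m e hm he hfl hef)
  constructor
  · -- a chain of length n in [a, ⊤]
    refine ⟨fun k => ⟨g (if k.val ≤ e then k.val else k.val + 1) ⊔ a,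
      Set.mem_Ici.mpr le_sup_right⟩, Fin.strictMono_iff_lt_succ.mpr ?_⟩
    intro i
    rw [Subtype.mk_lt_mk]
    have hc : (i.castSucc).val = i.val := rfl
    have hs : (i.succ).val = i.val + 1 := rfl
    rw [hc, hs]
    by_cases h1 : i.val + 1 ≤ e
    · simp only [if_pos (by omega : i.val ≤ e), if_pos h1]
      exact nonflat_lt i.val (by omega) (by omega)
    · by_cases h2 : i.val ≤ e
      · have heq : i.val = e := by omega
        rw [heq]
        simp only [if_pos (le_refl e), if_neg (by omega : ¬ (e + 1 ≤ e))]
        calc g e ⊔ a = g (e + 1) ⊔ a := hef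
        _ < g (e + 1 + 1) ⊔ a := nonflat_lt (e + 1) (by omega) (by omega)
      · simp only [if_neg h2, if_neg (by omega : ¬ (i.val + 1 ≤ e))]
        exact nonflat_lt (i.val + 1) (by omega) (by omega)
  · -- no longer chain in [a, ⊤]
    intro m y hy
    have := bound (m + 1) (fun i => if i = 0 then ⊥ else (y ⟨min (i - 1) m, by omega⟩ : K)) ?_
    · omega
    intro i hi
    rcases Nat.eq_zero_or_pos i with h | h
    · subst h
      simp only [if_pos rfl, if_neg (by omega : ¬ (0 + 1 = 0))]
      exact lt_of_lt_of_le ha.1 (y _).2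
    · simp only [if_neg (by omega : ¬ i = 0), if_neg (by omega : ¬ (i + 1 = 0))]
      refine Subtype.coe_lt_coe.mpr (hy ?_)
      rw [Fin.lt_def]
      simp
      omega

end Length
section Main

universe u

lemma card_meetIrred_aux : ∀ (n : ℕ) (K : Type u) [Lattice K] [Fintype K] [BoundedOrder K],
    Slim K → Semimodular K → HasLength K n → Nat.card {u : K // MeetIrred u} = n := by
  intro n
  induction n with
  | zero =>
    intro K _ _ _ hS hM hlen
    haveI : IsEmpty {u : K // MeetIrred u} := by
      refine ⟨fun ⟨u, hu⟩ => ?_⟩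
      have hchain : StrictMono (fun i : Fin 2 => if i.val = 0 then u else (⊤ : K)) := by
        refine Fin.strictMono_iff_lt_succ.mpr ?_
        intro i
        have hi : i = 0 := Subsingleton.elim i 0
        subst hi
        have h0 : ((0 : Fin 1).castSucc).val = 0 := rfl
        have h1 : ((0 : Fin 1).succ).val = 1 := rfl
        simp only [h0, h1, if_pos rfl, if_neg (by omega : ¬ (1 = 0))]
        exact lt_top_iff_ne_top.mpr hu.1
      exact absurd (hlen.2 1 _ hchain) (by omega)
    simp
  | succ n ih =>
    intro K _ _ _ hS hM hlen
    classical
    have hbotne : (⊥ : K) ≠ ⊤ := by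
      obtain ⟨x, hx⟩ := hlen.1
      intro h
      have h2 : x 0 < x (Fin.last (n + 1)) := hx (by rw [Fin.lt_def]; simp)
      have h3 : (⊥ : K) < ⊤ := lt_of_le_of_lt bot_le (h2.trans_le le_top)
      rw [h] at h3
      exact lt_irrefl ⊤ h3
    obtain ⟨a, ha⟩ := exists_atom hbotne
    haveI : Fintype (Set.Ici a) := Fintype.ofFinite _
    have IH : Nat.card {w : Set.Ici a // MeetIrred w} = n :=
      ih (Set.Ici a) (Ici_slim hS) (Ici_semimodular hM) (hasLength_Ici ha hM hlen)
    obtain ⟨u₀, hu₀, huniq⟩ := existsUnique_meetIrred_not_above ha hS hM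
    have e1 : {u : K // MeetIrred u} ≃
        {v : {u : K // MeetIrred u} // a ≤ v.1} ⊕ {v : {u : K // MeetIrred u} // ¬ a ≤ v.1} :=
      (Equiv.sumCompl _).symm
    have e2 : {v : {u : K // MeetIrred u} // a ≤ v.1} ≃ {w : Set.Ici a // MeetIrred w} :=
      { toFun := fun v => ⟨⟨v.1.1, Set.mem_Ici.mpr v.2⟩, (Ici_meetIrred_iff ha v.2).mp v.1.2⟩
        invFun := fun w => ⟨⟨w.1.1, (Ici_meetIrred_iff ha (Set.mem_Ici.mp w.1.2)).mpr w.2⟩,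
          Set.mem_Ici.mp w.1.2⟩
        left_inv := fun v => rfl
        right_inv := fun w => rfl }
    have cardB : Nat.card {v : {u : K // MeetIrred u} // ¬ a ≤ v.1} = 1 := by
      rw [Nat.card_eq_one_iff_unique]
      constructor
      · refine ⟨fun v w => ?_⟩
        have hv : v.1.1 = u₀ := huniq v.1.1 ⟨v.1.2, v.2⟩
        have hw : w.1.1 = u₀ := huniq w.1.1 ⟨w.1.2, w.2⟩
        exact Subtype.ext (Subtype.ext (hv.trans hw.symm))
      · exact ⟨⟨⟨u₀, hu₀.1⟩, hu₀.2⟩⟩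
    rw [Nat.card_congr e1, Nat.card_sum, Nat.card_congr e2, IH, cardB]

end Main

/-- in a finite slim semimodular lattice, the number of meet-irreducible
elements equals the length of the lattice. -/
theorem card_meetIrred_eq_length
    {K : Type*} [Lattice K] [Fintype K] [BoundedOrder K]
    (hS : Slim K) (hM : Semimodular K) (n : ℕ) (hlen : HasLength K n) :
    Nat.card {u : K // MeetIrred u} = n := by
  exact card_meetIrred_aux n K hS hM hlen
end

section
/- Let L be a slim semimodular lattice of length n ≥ 1, and let C = {⊥ = c₀ ⋖ c₁ ⋖ ⋯ ⋖ c_n = ⊤} and D = {⊥ = d₀ ⋖ d₁ ⋖ ⋯ ⋖ d_n = ⊤} be maximal chains of L such that every join-irreducible element of L belongs to C ∪ D. Then for each i ∈ {1,…,n} there exists a unique meet-irreducible element u of L such that c_i is the smallest element of C ∖ ↓u (where ↓u = {x : x ≤ u}); moreover, the map π₂ : {1,…,n} → {1,…,n} defined by letting d_{π₂(i)} be the smallest element of D ∖ ↓u for this u is a well-defined permutation of {1,…,n}. -/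
/-- `x` is the smallest element of the chain (range of) `e` not lying below `u`. -/
def SmallestOutside {L : Type*} [Lattice L] {n : ℕ} (e : Fin (n + 1) → L) (u x : L) : Prop :=
  ¬ x ≤ u ∧ ∀ k : Fin (n + 1), ¬ e k ≤ u → x ≤ e k

section Aux

variable {L : Type*} [Lattice L] [Fintype L] [BoundedOrder L] {n : ℕ}

private lemma smallestOutside_iff {c : Fin (n + 1) → L} (hc : StrictMono c) {u : L} {i : Fin n} :
    SmallestOutside c u (c i.succ) ↔ c i.castSucc ≤ u ∧ ¬ c i.succ ≤ u := by
  constructor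
  · rintro ⟨h1, h2⟩
    refine ⟨?_, h1⟩
    by_contra h
    exact absurd (h2 i.castSucc h) ((hc (Fin.castSucc_lt_succ (i := i))).not_ge)
  · rintro ⟨h1, h2⟩
    refine ⟨h2, fun k hk => ?_⟩
    rcases le_or_gt k i.castSucc with h | h
    · exact absurd ((hc.monotone h).trans h1) hk
    · exact hc.monotone (Fin.castSucc_lt_iff_succ_le.mp h)

/-- Existence of a meet-irreducible separating a covering pair. -/
private lemma exists_mi {a b : L} (hab : a ⋖ b) :
    ∃ u : L, MeetIrred u ∧ a ≤ u ∧ ¬ b ≤ u := by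
  classical
  obtain ⟨u, -, hmem, hmax⟩ :=
    Finite.exists_le_maximal (p := fun x : L => a ≤ x ∧ ¬ b ≤ x) (a := a)
      ⟨le_rfl, fun h => hab.lt.not_ge h⟩
  obtain ⟨hau, hbu⟩ := hmem
  refine ⟨u, ⟨fun h => hbu (h ▸ le_top), ?_⟩, hau, hbu⟩
  intro x y hxy
  by_contra hc'
  push_neg at hc'
  have hx : u < x := lt_of_le_of_ne (hxy ▸ inf_le_left) hc'.1
  have hy : u < y := lt_of_le_of_ne (hxy ▸ inf_le_right) hc'.2
  have hbx : b ≤ x := by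
    by_contra hbx
    exact hx.ne (le_antisymm hx.le (hmax ⟨hau.trans hx.le, hbx⟩ hx.le))
  have hby : b ≤ y := by
    by_contra hby
    exact hy.ne (le_antisymm hy.le (hmax ⟨hau.trans hy.le, hby⟩ hy.le))
  exact hbu (hxy ▸ le_inf hbx hby)

/-- Every element is a join `c a ⊔ d b` of elements of the two chains. -/
private lemma grid (c d : Fin (n + 1) → L) (hc0 : c 0 = ⊥) (hd0 : d 0 = ⊥)
    (hcm : Monotone c) (hdm : Monotone d)
    (hJ : ∀ p : L, JoinIrred p → (∃ k, p = c k) ∨ (∃ k, p = d k)) (x : L) :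
    ∃ a b : Fin (n + 1), x = c a ⊔ d b := by
  refine WellFounded.induction (C := fun x : L => ∃ a b : Fin (n + 1), x = c a ⊔ d b)
    wellFounded_lt x ?_
  intro x ih
  by_cases hbot : x = ⊥
  · exact ⟨0, 0, by simp [hbot, hc0, hd0]⟩
  by_cases hj : JoinIrred x
  · rcases hJ x hj with ⟨k, hk⟩ | ⟨k, hk⟩
    · exact ⟨k, 0, by simp [hk, hd0]⟩
    · exact ⟨0, k, by simp [hk, hc0]⟩
  · unfold JoinIrred at hj
    push_neg at hj
    obtain ⟨y, z, hxyz, hxy, hxz⟩ := hj hbot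
    have hy : y < x := lt_of_le_of_ne (hxyz ▸ le_sup_left) (Ne.symm hxy)
    have hz : z < x := lt_of_le_of_ne (hxyz ▸ le_sup_right) (Ne.symm hxz)
    obtain ⟨a1, b1, h1⟩ := ih y hy
    obtain ⟨a2, b2, h2⟩ := ih z hz
    have hmax1 : c (max a1 a2) ≤ x := by
      rcases max_cases a1 a2 with ⟨he, -⟩ | ⟨he, -⟩
      · rw [he]; exact le_trans (h1 ▸ le_sup_left) hy.le
      · rw [he]; exact le_trans (h2 ▸ le_sup_left) hz.le
    have hmax2 : d (max b1 b2) ≤ x := by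
      rcases max_cases b1 b2 with ⟨he, -⟩ | ⟨he, -⟩
      · rw [he]; exact le_trans (h1 ▸ le_sup_right) hy.le
      · rw [he]; exact le_trans (h2 ▸ le_sup_right) hz.le
    have hle : x ≤ c (max a1 a2) ⊔ d (max b1 b2) := by
      rw [hxyz, h1, h2]
      refine sup_le (sup_le ?_ ?_) (sup_le ?_ ?_)
      · exact le_sup_of_le_left (hcm (le_max_left _ _))
      · exact le_sup_of_le_right (hdm (le_max_left _ _))
      · exact le_sup_of_le_left (hcm (le_max_right _ _))
      · exact le_sup_of_le_right (hdm (le_max_right _ _))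
    exact ⟨_, _, le_antisymm hle (sup_le hmax1 hmax2)⟩

/-- A meet-irreducible element has a unique cover. -/
private lemma mi_cover_unique {u s t : L} (hu : MeetIrred u) (hs : u ⋖ s) (ht : u ⋖ t) :
    s = t := by
  by_contra hne
  have hst : s ⊓ t < s := by
    refine lt_of_le_of_ne inf_le_left (fun h => ?_)
    have hslet : s ≤ t := by rw [← h]; exact inf_le_right
    rcases lt_or_eq_of_le hslet with h' | h'
    · exact ht.2 hs.lt h'
    · exact hne h'
  have hust0 : u ≤ s ⊓ t := le_inf hs.lt.le ht.lt.le
  have hust : u = s ⊓ t := by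
    rcases lt_or_eq_of_le hust0 with h' | h'
    · exact absurd hst (hs.2 h')
    · exact h'
  rcases hu.2 s t hust with h | h
  · exact hs.lt.ne h
  · exact ht.lt.ne h

/-- Uniqueness of the meet-irreducible separating a covering pair of a chain. -/
private lemma mi_unique (hM : Semimodular L) (c d : Fin (n + 1) → L)
    (hc0 : c 0 = ⊥) (hd0 : d 0 = ⊥) (hc : StrictMono c) (hdm : Monotone d)
    (hcc : ∀ i : Fin n, c i.castSucc ⋖ c i.succ)
    (hJ : ∀ p : L, JoinIrred p → (∃ k, p = c k) ∨ (∃ k, p = d k))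
    {i : Fin n} {u v : L} (hu : MeetIrred u) (hv : MeetIrred v)
    (hu1 : c i.castSucc ≤ u) (hu2 : ¬ c i.succ ≤ u)
    (hv1 : c i.castSucc ≤ v) (hv2 : ¬ c i.succ ≤ v) : u = v := by
  have repr : ∀ w : L, c i.castSucc ≤ w → ¬ c i.succ ≤ w →
      ∃ b, w = c i.castSucc ⊔ d b := by
    intro w hw1 hw2
    obtain ⟨a, b, hab⟩ := grid c d hc0 hd0 hc.monotone hdm hJ w
    have ha : a ≤ i.castSucc := by
      by_contra h
      push_neg at h
      exact hw2 (le_trans (hc.monotone (Fin.castSucc_lt_iff_succ_le.mp h))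
        (le_trans le_sup_left hab.ge))
    refine ⟨b, le_antisymm ?_ (sup_le hw1 (le_trans le_sup_right hab.ge))⟩
    rw [hab]
    exact sup_le (le_sup_of_le_left (hc.monotone ha)) le_sup_right
  obtain ⟨b, hb⟩ := repr u hu1 hu2
  obtain ⟨b', hb'⟩ := repr v hv1 hv2
  have key : ∀ w w' : L, MeetIrred w → c i.castSucc ≤ w → ¬ c i.succ ≤ w →
      ¬ c i.succ ≤ w' → w ≤ w' → w = w' := by
    intro w w' hw hw1 hw2 hw2' hle
    rcases eq_or_lt_of_le hle with h | h
    · exact h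
    exfalso
    have hmeet : c i.succ ⊓ w = c i.castSucc := by
      have h1 : c i.castSucc ≤ c i.succ ⊓ w :=
        le_inf (hc (Fin.castSucc_lt_succ (i := i))).le hw1
      rcases eq_or_lt_of_le h1 with h' | h'
      · exact h'.symm
      · have h'' := (hcc i).2 h'
        have heq : c i.succ ⊓ w = c i.succ :=
          (lt_or_eq_of_le (inf_le_left : c i.succ ⊓ w ≤ c i.succ)).resolve_left h''
        exact absurd (heq ▸ (inf_le_right : c i.succ ⊓ w ≤ w)) hw2
    have hcov : w ⋖ c i.succ ⊔ w := hM (c i.succ) w (by rw [hmeet]; exact hcc i)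
    obtain ⟨s, hws, hsw'⟩ := exists_covBy_le_of_lt h
    have heq : s = c i.succ ⊔ w := mi_cover_unique hw hws hcov
    exact hw2' (le_trans le_sup_left (heq ▸ hsw'))
  rcases le_total b b' with h | h
  · refine key u v hu hu1 hu2 hv2 ?_
    rw [hb, hb']
    exact sup_le le_sup_left (le_sup_of_le_right (hdm h))
  · refine (key v u hv hv1 hv2 hu2 ?_).symm
    rw [hb, hb']
    exact sup_le le_sup_left (le_sup_of_le_right (hdm h))

/-- Below any non-top element there is a "last" chain element. -/
private lemma exists_boundary {e : Fin (n + 1) → L} (he0 : e 0 = ⊥) (hen : e (Fin.last n) = ⊤)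
    {u : L} (hu : u ≠ ⊤) : ∃ k : Fin n, e k.castSucc ≤ u ∧ ¬ e k.succ ≤ u := by
  classical
  have hex : ∃ m, ∃ h : m < n + 1, ¬ e ⟨m, h⟩ ≤ u := by
    refine ⟨n, Nat.lt_succ_self n, ?_⟩
    rw [show (⟨n, Nat.lt_succ_self n⟩ : Fin (n + 1)) = Fin.last n from rfl, hen]
    exact fun h => hu (top_le_iff.mp h)
  have h0 : ¬ (∃ h : 0 < n + 1, ¬ e ⟨0, h⟩ ≤ u) := by
    push_neg
    intro h
    rw [show (⟨0, h⟩ : Fin (n + 1)) = 0 from rfl, he0]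
    exact bot_le
  have hmpos : 0 < Nat.find hex :=
    Nat.pos_of_ne_zero (fun h => h0 (h ▸ Nat.find_spec hex))
  obtain ⟨hlt, hnle⟩ := Nat.find_spec hex
  have hle : Nat.find hex ≤ n := Nat.lt_succ_iff.mp hlt
  refine ⟨⟨Nat.find hex - 1, by omega⟩, ?_, ?_⟩
  · have hm1 : ¬ ∃ h : Nat.find hex - 1 < n + 1, ¬ e ⟨Nat.find hex - 1, h⟩ ≤ u :=
      Nat.find_min hex (by omega)
    push_neg at hm1
    exact hm1 (by omega)
  · have hsucc : Fin.succ (⟨Nat.find hex - 1, by omega⟩ : Fin n)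
        = (⟨Nat.find hex, hlt⟩ : Fin (n + 1)) := by
      ext
      simp only [Fin.val_succ, Fin.val_mk]
      omega
    rw [hsucc]
    exact hnle

/-- Uniqueness of the index along a chain. -/
private lemma index_unique {e : Fin (n + 1) → L} (he : StrictMono e) {u : L} {i i' : Fin n}
    (h1 : e i.castSucc ≤ u) (h2 : ¬ e i.succ ≤ u)
    (h1' : e i'.castSucc ≤ u) (h2' : ¬ e i'.succ ≤ u) : i = i' := by
  by_contra hne
  rcases lt_or_gt_of_ne hne with h | h
  · have hv := Fin.lt_def.mp h
    have hle : i.succ ≤ i'.castSucc := by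
      rw [Fin.le_def]
      simp
      omega
    exact h2 (le_trans (he.monotone hle) h1')
  · have hv := Fin.lt_def.mp h
    have hle : i'.succ ≤ i.castSucc := by
      rw [Fin.le_def]
      simp
      omega
    exact h2' (le_trans (he.monotone hle) h1)

end Aux

/-- let `L` be a slim semimodular lattice of length `n ≥ 1` and let
`c`, `d` be maximal chains (`⊥ = c₀ ⋖ ⋯ ⋖ c_n = ⊤`, `⊥ = d₀ ⋖ ⋯ ⋖ d_n = ⊤`)
containing all join-irreducible elements.  For each `i ∈ {1,…,n}` there is a unique
meet-irreducible `u` such that `c_i` is the smallest element of `C ∖ ↓u`; moreover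
the assignment `i ↦ j`, where `d_j` is the smallest element of `D ∖ ↓u`, is a
permutation `π₂` of `{1,…,n}`. -/
theorem pi_two_well_defined
    {L : Type*} [Lattice L] [Fintype L] [BoundedOrder L] {n : ℕ} (hn : 1 ≤ n)
    (hS : Slim L) (hM : Semimodular L) (hlen : HasLength L n)
    (c d : Fin (n + 1) → L)
    (hc0 : c 0 = ⊥) (hcn : c (Fin.last n) = ⊤) (hcc : ∀ i : Fin n, c i.castSucc ⋖ c i.succ)
    (hd0 : d 0 = ⊥) (hdn : d (Fin.last n) = ⊤) (hdc : ∀ i : Fin n, d i.castSucc ⋖ d i.succ)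
    (hJ : ∀ p : L, JoinIrred p → (∃ k, p = c k) ∨ (∃ k, p = d k)) :
    (∀ i : Fin n, ∃! u : L, MeetIrred u ∧ SmallestOutside c u (c i.succ)) ∧
    ∃ π : Equiv.Perm (Fin n), ∀ i : Fin n, ∃ u : L, MeetIrred u ∧
      SmallestOutside c u (c i.succ) ∧ SmallestOutside d u (d (π i).succ) := by
  classical
  have hcS : StrictMono c := Fin.strictMono_iff_lt_succ.mpr (fun i => (hcc i).lt)
  have hdS : StrictMono d := Fin.strictMono_iff_lt_succ.mpr (fun i => (hdc i).lt)
  have hJ' : ∀ p : L, JoinIrred p → (∃ k, p = d k) ∨ (∃ k, p = c k) :=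
    fun p hp => (hJ p hp).symm
  have main : ∀ i : Fin n, ∃! u : L, MeetIrred u ∧ SmallestOutside c u (c i.succ) := by
    intro i
    obtain ⟨u, hmi, h1, h2⟩ := exists_mi (hcc i)
    refine ⟨u, ⟨hmi, (smallestOutside_iff hcS).mpr ⟨h1, h2⟩⟩, ?_⟩
    rintro v ⟨hvmi, hvs⟩
    obtain ⟨hv1, hv2⟩ := (smallestOutside_iff hcS).mp hvs
    exact mi_unique hM c d hc0 hd0 hcS hdS.monotone hcc hJ hvmi hmi hv1 hv2 h1 h2
  refine ⟨main, ?_⟩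
  have hchoice : ∀ i : Fin n, ∃ u : L, MeetIrred u ∧ c i.castSucc ≤ u ∧ ¬ c i.succ ≤ u := by
    intro i
    obtain ⟨u, h, h1, h2⟩ := exists_mi (hcc i)
    exact ⟨u, h, h1, h2⟩
  choose u hmi hc1 hc2 using hchoice
  have hbd : ∀ i : Fin n, ∃ k : Fin n, d k.castSucc ≤ u i ∧ ¬ d k.succ ≤ u i :=
    fun i => exists_boundary hd0 hdn (hmi i).1
  choose π₀ hd1 hd2 using hbd
  have hinj : Function.Injective π₀ := by
    intro i i' h
    have h1' : d (π₀ i).castSucc ≤ u i' := by rw [h]; exact hd1 i'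
    have h2' : ¬ d (π₀ i).succ ≤ u i' := by rw [h]; exact hd2 i'
    have hueq : u i = u i' :=
      mi_unique hM d c hd0 hc0 hdS hcS.monotone hdc hJ' (hmi i) (hmi i')
        (hd1 i) (hd2 i) h1' h2'
    have hA : c i'.castSucc ≤ u i := by rw [hueq]; exact hc1 i'
    have hB : ¬ c i'.succ ≤ u i := by rw [hueq]; exact hc2 i'
    exact index_unique hcS (hc1 i) (hc2 i) hA hB
  refine ⟨Equiv.ofBijective π₀ (Finite.injective_iff_bijective.mp hinj), fun i => ?_⟩
  refine ⟨u i, hmi i, (smallestOutside_iff hcS).mpr ⟨hc1 i, hc2 i⟩, ?_⟩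
  show SmallestOutside d (u i) (d (π₀ i).succ)
  exact (smallestOutside_iff hdS).mpr ⟨hd1 i, hd2 i⟩
end

section
/- Let L be a slim semimodular lattice of length n ≥ 1, and let C = {⊥ = c₀ ⋖ c₁ ⋖ ⋯ ⋖ c_n = ⊤} and D = {⊥ = d₀ ⋖ d₁ ⋖ ⋯ ⋖ d_n = ⊤} be maximal chains of L such that every join-irreducible element of L belongs to C ∪ D. Then for each i ∈ {1,…,n} there is exactly one j ∈ {1,…,n} such that c_{i−1} ⊔ d_{j−1} ≠ c_i ⊔ d_j and c_i ⊔ d_j = c_{i−1} ⊔ d_j = c_i ⊔ d_{j−1}; moreover, the map π₃ : i ↦ j so defined is a permutation of {1,…,n}. -/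
/-- In a semimodular lattice, joining with `x` sends a covering pair to an equal or
covering pair. -/
lemma cov_sup {L : Type*} [Lattice L] (hM : Semimodular L) {a b : L} (h : a ⋖ b) (x : L) :
    a ⊔ x = b ⊔ x ∨ a ⊔ x ⋖ b ⊔ x := by
  by_cases he : a ⊔ x = b ⊔ x
  · exact Or.inl he
  · right
    have hle : a ⊔ x ≤ b ⊔ x := sup_le_sup_right h.le x
    have hmeet : b ⊓ (a ⊔ x) = a := by
      have h1 : a ≤ b ⊓ (a ⊔ x) := le_inf h.le le_sup_left
      rcases h.eq_or_eq h1 inf_le_left with h2 | h2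
      · exact h2
      · exact absurd (le_antisymm hle (sup_le (inf_eq_left.mp h2) le_sup_right)) he
    have hcov : (a ⊔ x) ⋖ b ⊔ (a ⊔ x) := hM b (a ⊔ x) (by rw [hmeet]; exact h)
    have : b ⊔ (a ⊔ x) = b ⊔ x := by rw [← sup_assoc, sup_eq_left.mpr h.le]
    rwa [this] at hcov

lemma cond_symm {L : Type*} [Lattice L] {a a' b b' : L}
    (h : a ⊔ b ≠ a' ⊔ b' ∧ a' ⊔ b' = a ⊔ b' ∧ a' ⊔ b' = a' ⊔ b) :
    b ⊔ a ≠ b' ⊔ a' ∧ b' ⊔ a' = b ⊔ a' ∧ b' ⊔ a' = b' ⊔ a := by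
  obtain ⟨h1, h2, h3⟩ := h
  refine ⟨?_, ?_, ?_⟩
  · rw [sup_comm b a, sup_comm b' a']; exact h1
  · rw [sup_comm b' a', sup_comm b a']; exact h3
  · rw [sup_comm b' a', sup_comm b' a]; exact h2

/-- Main existence-and-uniqueness lemma. -/
lemma key_exu {L : Type*} [Lattice L] [OrderBot L] [OrderTop L] (hM : Semimodular L)
    {n : ℕ} (c d : Fin (n + 1) → L)
    (hcc : ∀ i : Fin n, c i.castSucc ⋖ c i.succ)
    (hd0 : d 0 = ⊥) (hdn : d (Fin.last n) = ⊤)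
    (hdc : ∀ j : Fin n, d j.castSucc ⋖ d j.succ)
    (i : Fin n) :
    ∃! j : Fin n,
      c i.castSucc ⊔ d j.castSucc ≠ c i.succ ⊔ d j.succ ∧
      c i.succ ⊔ d j.succ = c i.castSucc ⊔ d j.succ ∧
      c i.succ ⊔ d j.succ = c i.succ ⊔ d j.castSucc := by
  classical
  set a := c i.castSucc with ha_def
  set a' := c i.succ with ha'_def
  have ha : a ⋖ a' := hcc i
  have hdm : Monotone d :=
    (Fin.strictMono_iff_lt_succ.mpr (fun j => (hdc j).lt)).monotone
  set P : Fin (n + 1) → Prop := fun j => a ⊔ d j = a' ⊔ d j with hP_def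
  have Pmono : ∀ {j j' : Fin (n + 1)}, j ≤ j' → P j → P j' := by
    intro j j' hjj' hPj
    show a ⊔ d j' = a' ⊔ d j'
    calc a ⊔ d j' = (a ⊔ d j) ⊔ d j' := by rw [sup_assoc, sup_eq_right.mpr (hdm hjj')]
    _ = (a' ⊔ d j) ⊔ d j' := by rw [hPj]
    _ = a' ⊔ d j' := by rw [sup_assoc, sup_eq_right.mpr (hdm hjj')]
  have hP0 : ¬ P 0 := by
    show ¬ (a ⊔ d 0 = a' ⊔ d 0)
    rw [hd0, sup_bot_eq, sup_bot_eq]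
    exact ha.lt.ne
  have hPlast : P (Fin.last n) := by
    show a ⊔ d (Fin.last n) = a' ⊔ d (Fin.last n)
    rw [hdn, sup_top_eq, sup_top_eq]
  -- the step lemma
  have step : ∀ j : Fin n, ¬ P j.castSucc → P j.succ →
      a' ⊔ d j.succ = a' ⊔ d j.castSucc := by
    intro j h1 h2
    set b := d j.castSucc
    set b' := d j.succ
    have hb : b ⋖ b' := hdc j
    have h2' : a ⊔ b' = a' ⊔ b' := h2
    have K1 : a ⊔ b ⋖ a' ⊔ b := (cov_sup hM ha b).resolve_left h1
    rcases cov_sup hM hb a with he | hcv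
    · -- b ⊔ a = b' ⊔ a, i.e. a ⊔ b = a ⊔ b'
      have he' : a ⊔ b = a ⊔ b' := by rw [sup_comm a b, sup_comm a b']; exact he
      have h4 : a' ⊔ b' = a ⊔ b := by rw [← h2', ← he']
      refine le_antisymm ?_ (sup_le_sup_left hb.le a')
      rw [h4]; exact sup_le_sup_right ha.le b
    · -- a ⊔ b ⋖ a ⊔ b'
      have hcv' : a ⊔ b ⋖ a ⊔ b' := by rwa [sup_comm b a, sup_comm b' a] at hcv
      have h3 : a ⊔ b < a' ⊔ b := K1.lt
      have h4 : a' ⊔ b ≤ a ⊔ b' := by rw [h2']; exact sup_le_sup_left hb.le a'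
      have h5 : a' ⊔ b = a ⊔ b' := by
        rcases lt_or_eq_of_le h4 with h5 | h5
        · exact absurd h5 (hcv'.2 h3)
        · exact h5
      rw [← h2', ← h5]
  -- translate conditions
  have equiv_cond : ∀ j : Fin n,
      (a ⊔ d j.castSucc ≠ a' ⊔ d j.succ ∧
       a' ⊔ d j.succ = a ⊔ d j.succ ∧
       a' ⊔ d j.succ = a' ⊔ d j.castSucc) ↔ (¬ P j.castSucc ∧ P j.succ) := by
    intro j
    constructor
    · rintro ⟨hA, hB, hC⟩
      refine ⟨?_, hB.symm⟩
      intro hPc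
      have hPc' : a ⊔ d j.castSucc = a' ⊔ d j.castSucc := hPc
      exact hA (by rw [hPc', ← hC])
    · rintro ⟨h1, h2⟩
      have hC := step j h1 h2
      refine ⟨?_, h2.symm, hC⟩
      intro hA
      exact h1 (show a ⊔ d j.castSucc = a' ⊔ d j.castSucc by rw [hA, hC])
  -- existence of j with ¬ P j.castSucc ∧ P j.succ
  have hex : ∃ j : Fin n, ¬ P j.castSucc ∧ P j.succ := by
    set T : Finset (Fin (n + 1)) := Finset.univ.filter P with hT
    have hTne : T.Nonempty := ⟨Fin.last n, Finset.mem_filter.mpr ⟨Finset.mem_univ _, hPlast⟩⟩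
    set m := T.min' hTne with hm
    have hmT : m ∈ T := T.min'_mem hTne
    have hmP : P m := by simpa [hT] using hmT
    have hm0 : m ≠ 0 := fun h => hP0 (h ▸ hmP)
    obtain ⟨j, hj⟩ := Fin.eq_succ_of_ne_zero hm0
    refine ⟨j, ?_, hj ▸ hmP⟩
    intro hPc
    have : m ≤ j.castSucc := T.min'_le _ (Finset.mem_filter.mpr ⟨Finset.mem_univ _, hPc⟩)
    rw [hj] at this
    exact absurd this (not_le.mpr (Fin.castSucc_lt_succ (i := j)))
  obtain ⟨j₀, hj₀⟩ := hex
  refine ⟨j₀, (equiv_cond j₀).mpr hj₀, ?_⟩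
  intro j hj
  have hj' := (equiv_cond j).mp hj
  by_contra hne
  rcases lt_or_gt_of_ne hne with hlt | hlt
  · exact hj₀.1 (Pmono (Fin.succ_le_castSucc_iff.mpr hlt) hj'.2)
  · exact hj'.1 (Pmono (Fin.succ_le_castSucc_iff.mpr hlt) hj₀.2)

/-- let `L` be a slim semimodular lattice of length `n ≥ 1` and let
`c`, `d` be maximal chains containing all join-irreducible elements.  For each
`i ∈ {1,…,n}` there is exactly one `j` with
`c_{i−1} ⊔ d_{j−1} ≠ c_i ⊔ d_j = c_{i−1} ⊔ d_j = c_i ⊔ d_{j−1}`, and `i ↦ j` is a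
permutation `π₃` of `{1,…,n}`. -/
theorem pi_three_well_defined
    {L : Type*} [Lattice L] [Fintype L] [BoundedOrder L] {n : ℕ} (hn : 1 ≤ n)
    (hS : Slim L) (hM : Semimodular L) (hlen : HasLength L n)
    (c d : Fin (n + 1) → L)
    (hc0 : c 0 = ⊥) (hcn : c (Fin.last n) = ⊤) (hcc : ∀ i : Fin n, c i.castSucc ⋖ c i.succ)
    (hd0 : d 0 = ⊥) (hdn : d (Fin.last n) = ⊤) (hdc : ∀ i : Fin n, d i.castSucc ⋖ d i.succ)
    (hJ : ∀ p : L, JoinIrred p → (∃ k, p = c k) ∨ (∃ k, p = d k)) :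
    (∀ i : Fin n, ∃! j : Fin n,
      c i.castSucc ⊔ d j.castSucc ≠ c i.succ ⊔ d j.succ ∧
      c i.succ ⊔ d j.succ = c i.castSucc ⊔ d j.succ ∧
      c i.succ ⊔ d j.succ = c i.succ ⊔ d j.castSucc) ∧
    ∃ π : Equiv.Perm (Fin n), ∀ i : Fin n,
      c i.castSucc ⊔ d (π i).castSucc ≠ c i.succ ⊔ d (π i).succ ∧
      c i.succ ⊔ d (π i).succ = c i.castSucc ⊔ d (π i).succ ∧
      c i.succ ⊔ d (π i).succ = c i.succ ⊔ d (π i).castSucc := by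
  have exu : ∀ i : Fin n, ∃! j : Fin n,
      c i.castSucc ⊔ d j.castSucc ≠ c i.succ ⊔ d j.succ ∧
      c i.succ ⊔ d j.succ = c i.castSucc ⊔ d j.succ ∧
      c i.succ ⊔ d j.succ = c i.succ ⊔ d j.castSucc :=
    fun i => key_exu hM c d hcc hd0 hdn hdc i
  have exu' : ∀ j : Fin n, ∃! i : Fin n,
      d j.castSucc ⊔ c i.castSucc ≠ d j.succ ⊔ c i.succ ∧
      d j.succ ⊔ c i.succ = d j.castSucc ⊔ c i.succ ∧
      d j.succ ⊔ c i.succ = d j.succ ⊔ c i.castSucc :=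
    fun j => key_exu hM d c hdc hc0 hcn hcc j
  refine ⟨exu, ?_⟩
  choose f hf using fun i => (exu i).exists
  have hinj : Function.Injective f := by
    intro i₁ i₂ h
    exact (exu' (f i₁)).unique (cond_symm (hf i₁)) (h ▸ cond_symm (hf i₂))
  refine ⟨Equiv.ofBijective f (Finite.injective_iff_bijective.mp hinj), fun i => ?_⟩
  exact hf i
end

section
/- Let L be a slim semimodular lattice of length n ≥ 1, and let C = {⊥ = c₀ ⋖ c₁ ⋖ ⋯ ⋖ c_n = ⊤} and D = {⊥ = d₀ ⋖ d₁ ⋖ ⋯ ⋖ d_n = ⊤} be maximal chains of L such that every join-irreducible element of L belongs to C ∪ D. Then for all i, j ∈ {1,…,n} the following are equivalent: (1) there exists a meet-irreducible element u of L such that c_i is the smallest element of C ∖ ↓u and d_j is the smallest element of D ∖ ↓u; (2) c_{i−1} ⊔ d_{j−1} ≠ c_i ⊔ d_j and c_i ⊔ d_j = c_{i−1} ⊔ d_j = c_i ⊔ d_{j−1}. (That is, the permutations π₂ and π₃ associated with the pair (C, D) coincide.) -/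
/-- in the setting of two maximal chains of a slim semimodular lattice of
length `n ≥ 1` containing all join-irreducibles, the defining conditions of `π₂` and
`π₃` are equivalent; that is, the two permutations coincide. -/
theorem pi_two_eq_pi_three
    {L : Type*} [Lattice L] [Fintype L] [BoundedOrder L] {n : ℕ} (hn : 1 ≤ n)
    (hS : Slim L) (hM : Semimodular L) (hlen : HasLength L n)
    (c d : Fin (n + 1) → L)
    (hc0 : c 0 = ⊥) (hcn : c (Fin.last n) = ⊤) (hcc : ∀ i : Fin n, c i.castSucc ⋖ c i.succ)
    (hd0 : d 0 = ⊥) (hdn : d (Fin.last n) = ⊤) (hdc : ∀ i : Fin n, d i.castSucc ⋖ d i.succ)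
    (hJ : ∀ p : L, JoinIrred p → (∃ k, p = c k) ∨ (∃ k, p = d k)) :
    ∀ i j : Fin n,
      (∃ u : L, MeetIrred u ∧
        SmallestOutside c u (c i.succ) ∧ SmallestOutside d u (d j.succ)) ↔
      (c i.castSucc ⊔ d j.castSucc ≠ c i.succ ⊔ d j.succ ∧
       c i.succ ⊔ d j.succ = c i.castSucc ⊔ d j.succ ∧
       c i.succ ⊔ d j.succ = c i.succ ⊔ d j.castSucc) := by
  classical
  -- strict monotonicity of the chains
  have hcm : StrictMono c := Fin.strictMono_iff_lt_succ.mpr (fun i => (hcc i).lt)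
  have hdm : StrictMono d := Fin.strictMono_iff_lt_succ.mpr (fun i => (hdc i).lt)
  have hcsup : ∀ a1 a2 : Fin (n+1), c a1 ⊔ c a2 = c (max a1 a2) := by
    intro a1 a2
    rcases le_total a1 a2 with h | h
    · rw [max_eq_right h, sup_eq_right]; exact hcm.monotone h
    · rw [max_eq_left h, sup_eq_left]; exact hcm.monotone h
  have hdsup : ∀ b1 b2 : Fin (n+1), d b1 ⊔ d b2 = d (max b1 b2) := by
    intro b1 b2
    rcases le_total b1 b2 with h | h
    · rw [max_eq_right h, sup_eq_right]; exact hdm.monotone h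
    · rw [max_eq_left h, sup_eq_left]; exact hdm.monotone h
  -- every element is of the form c a ⊔ d b
  have hrep : ∀ x : L, ∃ a b, x = c a ⊔ d b := by
    intro x
    induction x using WellFoundedLT.induction with
    | _ x ih =>
      by_cases hbot : x = ⊥
      · exact ⟨0, 0, by rw [hbot, hc0, hd0, sup_idem]⟩
      by_cases hji : JoinIrred x
      · rcases hJ x hji with ⟨k, hk⟩ | ⟨k, hk⟩
        · exact ⟨k, 0, by rw [hd0, sup_bot_eq, hk]⟩
        · exact ⟨0, k, by rw [hc0, bot_sup_eq, hk]⟩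
      · have hex : ∃ a b : L, x = a ⊔ b ∧ x ≠ a ∧ x ≠ b := by
          by_contra h
          push_neg at h
          exact hji ⟨hbot, fun a b hab => or_iff_not_imp_left.mpr (h a b hab)⟩
        obtain ⟨a, b, hab, hxa, hxb⟩ := hex
        have ha : a < x := lt_of_le_of_ne (hab ▸ le_sup_left) (Ne.symm hxa)
        have hb : b < x := lt_of_le_of_ne (hab ▸ le_sup_right) (Ne.symm hxb)
        obtain ⟨a1, b1, h1⟩ := ih a ha
        obtain ⟨a2, b2, h2⟩ := ih b hb
        refine ⟨max a1 a2, max b1 b2, ?_⟩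
        rw [hab, h1, h2, sup_sup_sup_comm, hcsup, hdsup]
  -- the semimodular cover step
  have hstep : ∀ (e : Fin (n+1) → L) (_ : ∀ i : Fin n, e i.castSucc ⋖ e i.succ)
      (i : Fin n) (u : L), e i.castSucc ≤ u → ¬ e i.succ ≤ u → u ⋖ u ⊔ e i.succ := by
    intro e hec i u h1 h2
    have hmeet : e i.succ ⊓ u = e i.castSucc := by
      rcases (hec i).eq_or_eq (le_inf (hec i).le h1) inf_le_left with h | h
      · exact h
      · exact absurd (h ▸ inf_le_right) h2
    have := hM (e i.succ) u (hmeet ▸ hec i)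
    rwa [sup_comm] at this
  intro i j
  set α := c i.castSucc with hα
  set β := d j.castSucc with hβ
  set γ := c i.succ with hγ
  set δ := d j.succ with hδ
  have hαγ : α ≤ γ := (hcc i).le
  have hβδ : β ≤ δ := (hdc j).le
  constructor
  · rintro ⟨u, hu, ⟨hc1, hc2⟩, ⟨hd1, hd2⟩⟩
    -- c i.castSucc ≤ u and d j.castSucc ≤ u
    have hciu : α ≤ u := by
      by_contra h
      exact absurd (hc2 i.castSucc h) ((hcm (Fin.castSucc_lt_succ (i := i))).not_ge)
    have hdju : β ≤ u := by
      by_contra h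
      exact absurd (hd2 j.castSucc h) ((hdm (Fin.castSucc_lt_succ (i := j))).not_ge)
    -- u = α ⊔ β
    obtain ⟨a, b, hab⟩ := hrep u
    have hca : c a ≤ u := hab ▸ le_sup_left
    have hdb : d b ≤ u := hab ▸ le_sup_right
    have haa : a ≤ i.castSucc := not_lt.mp (fun h =>
      hc1 (le_trans (hcm.monotone (Fin.castSucc_lt_iff_succ_le.mp h)) hca))
    have hbb : b ≤ j.castSucc := not_lt.mp (fun h =>
      hd1 (le_trans (hdm.monotone (Fin.castSucc_lt_iff_succ_le.mp h)) hdb))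
    have hurep : u = α ⊔ β :=
      le_antisymm (hab ▸ sup_le_sup (hcm.monotone haa) (hdm.monotone hbb))
        (sup_le hciu hdju)
    -- the two covers of u coincide
    have cover1 : u ⋖ u ⊔ γ := hstep c hcc i u hciu hc1
    have cover2 : u ⋖ u ⊔ δ := hstep d hdc j u hdju hd1
    have hkey : u ⊔ γ = u ⊔ δ := by
      by_contra hne
      have hmeet : u = (u ⊔ γ) ⊓ (u ⊔ δ) := by
        rcases cover1.eq_or_eq (le_inf le_sup_left le_sup_left) inf_le_left with h | h
        · exact h.symm
        · rcases cover2.eq_or_eq le_sup_left (h ▸ inf_le_right) with h' | h'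
          · exact absurd h' cover1.lt.ne'
          · exact absurd (h' ▸ rfl) hne
      rcases hu.2 _ _ hmeet with h | h
      · exact cover1.lt.ne h
      · exact cover2.lt.ne h
    -- translate hkey into sup identities
    have e1 : (α ⊔ β) ⊔ γ = γ ⊔ β := by rw [sup_right_comm, sup_eq_right.mpr hαγ]
    have e2 : (α ⊔ β) ⊔ δ = α ⊔ δ := by rw [sup_assoc, sup_eq_right.mpr hβδ]
    have hkey2 : γ ⊔ β = α ⊔ δ := by rw [← e1, ← e2, ← hurep, hkey]
    refine ⟨?_, ?_, ?_⟩
    · intro h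
      exact hd1 (by rw [hurep, h]; exact le_sup_right)
    · exact le_antisymm (sup_le (le_sup_left.trans hkey2.le) le_sup_right)
        (sup_le_sup_right hαγ δ)
    · exact le_antisymm (sup_le le_sup_left (le_sup_right.trans hkey2.symm.le))
        (sup_le_sup_left hβδ γ)
  · rintro ⟨hne, hG2, hG3⟩
    have hciv : ¬ γ ≤ α ⊔ β := by
      intro h
      apply hne
      have hδv : δ ≤ α ⊔ β := by
        calc δ ≤ γ ⊔ δ := le_sup_right
        _ = γ ⊔ β := hG3
        _ ≤ α ⊔ β := sup_le h le_sup_right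
      exact le_antisymm (sup_le_sup hαγ hβδ) (sup_le h hδv)
    have hdjv : ¬ δ ≤ α ⊔ β := by
      intro h
      apply hne
      have hγv : γ ≤ α ⊔ β := by
        calc γ ≤ γ ⊔ δ := le_sup_left
        _ = α ⊔ δ := hG2
        _ ≤ α ⊔ β := sup_le le_sup_left h
      exact le_antisymm (sup_le_sup hαγ hβδ) (sup_le hγv h)
    -- pick a maximal element above α ⊔ β avoiding γ and δ
    obtain ⟨u, huS, humax⟩ : ∃ u ∈ Finset.univ.filter (fun x => α ⊔ β ≤ x ∧ ¬ γ ≤ x ∧ ¬ δ ≤ x),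
        ∀ x ∈ Finset.univ.filter (fun x => α ⊔ β ≤ x ∧ ¬ γ ≤ x ∧ ¬ δ ≤ x), ¬ u < x := by
      obtain ⟨u, hu⟩ := Finset.exists_maximal
        (s := Finset.univ.filter (fun x => α ⊔ β ≤ x ∧ ¬ γ ≤ x ∧ ¬ δ ≤ x))
        ⟨α ⊔ β, Finset.mem_filter.mpr ⟨Finset.mem_univ _, le_refl _, hciv, hdjv⟩⟩
      exact ⟨u, hu.1, fun x hx hlt => hlt.not_ge (hu.2 hx hlt.le)⟩
    obtain ⟨hvu, hγu, hδu⟩ := (Finset.mem_filter.mp huS).2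
    have hmax : ∀ x : L, u < x → γ ≤ x ∨ δ ≤ x := by
      intro x hx
      by_contra h
      push_neg at h
      exact humax x (Finset.mem_filter.mpr
        ⟨Finset.mem_univ _, le_trans hvu hx.le, h.1, h.2⟩) hx
    refine ⟨u, ⟨fun h => hγu (h ▸ le_top), ?_⟩, ⟨hγu, ?_⟩, ⟨hδu, ?_⟩⟩
    · intro a b hab
      by_contra h
      push_neg at h
      have hua : u < a := lt_of_le_of_ne (hab ▸ inf_le_left) h.1
      have hub : u < b := lt_of_le_of_ne (hab ▸ inf_le_right) h.2
      have hβu : β ≤ u := le_sup_right.trans hvu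
      have hαu : α ≤ u := le_sup_left.trans hvu
      rcases hmax a hua with ha | ha <;> rcases hmax b hub with hb | hb
      · exact hγu (hab ▸ le_inf ha hb)
      · -- γ ≤ a, δ ≤ b : then δ ≤ γ ⊔ β ≤ a
        have : δ ≤ a := by
          calc δ ≤ γ ⊔ δ := le_sup_right
          _ = γ ⊔ β := hG3
          _ ≤ a := sup_le ha (hβu.trans hua.le)
        exact hδu (hab ▸ le_inf this hb)
      · -- δ ≤ a, γ ≤ b : then γ ≤ α ⊔ δ ≤ a
        have : γ ≤ a := by
          calc γ ≤ γ ⊔ δ := le_sup_left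
          _ = α ⊔ δ := hG2
          _ ≤ a := sup_le (hαu.trans hua.le) ha
        exact hγu (hab ▸ le_inf this hb)
      · exact hδu (hab ▸ le_inf ha hb)
    · intro k hk
      have hik : i.succ ≤ k := by
        by_contra h
        exact hk (le_trans (hcm.monotone (Fin.le_castSucc_iff.mpr (not_le.mp h)))
          ((le_sup_left : α ≤ α ⊔ β).trans hvu))
      exact hcm.monotone hik
    · intro k hk
      have hjk : j.succ ≤ k := by
        by_contra h
        exact hk (le_trans (hdm.monotone (Fin.le_castSucc_iff.mpr (not_le.mp h)))
          ((le_sup_right : β ≤ α ⊔ β).trans hvu))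
      exact hdm.monotone hjk
end

section
/- For every n ≥ 1 and every permutation π of {1,…,n}, the quotient G_n/β_π (the set of β_π-classes ordered by [a] ≤ [b] iff (a ⊔ b, b) ∈ β_π) is a lattice that is slim, semimodular, and of length n. -/
/-- The square grid `G_n`: the direct product of two `(n+1)`-element chains. -/
abbrev Grid (n : ℕ) := Fin (n + 1) × Fin (n + 1)

/-- `θ` is a join-congruence: an equivalence relation compatible with `⊔`. -/
def IsJoinCong {S : Type*} [SemilatticeSup S] (θ : S → S → Prop) : Prop :=
  Equivalence θ ∧ ∀ a b c : S, θ a b → θ (a ⊔ c) (b ⊔ c)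

/-- The smallest join-congruence containing the relation `R`. -/
def joinCongGen {S : Type*} [SemilatticeSup S] (R : S → S → Prop) : S → S → Prop :=
  fun a b => ∀ θ : S → S → Prop, IsJoinCong θ → (∀ x y, R x y → θ x y) → θ a b

theorem joinCongGen_equivalence {S : Type*} [SemilatticeSup S] (R : S → S → Prop) :
    Equivalence (joinCongGen R) where
  refl a := fun _θ hθ _ => hθ.1.refl a
  symm h := fun θ hθ hR => hθ.1.symm (h θ hθ hR)
  trans h₁ h₂ := fun θ hθ hR => hθ.1.trans (h₁ θ hθ hR) (h₂ θ hθ hR)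

/-- The generating pairs of `β_π`. -/
def betaGen {n : ℕ} (π : Equiv.Perm (Fin n)) : Grid n → Grid n → Prop :=
  fun a b => ∃ i : Fin n,
    (a = (i.castSucc, (π i).succ) ∧ b = (i.succ, (π i).succ)) ∨
    (a = (i.succ, (π i).castSucc) ∧ b = (i.succ, (π i).succ))

/-- `β_π`, the smallest join-congruence on the grid containing `betaGen π`. -/
def beta {n : ℕ} (π : Equiv.Perm (Fin n)) : Grid n → Grid n → Prop :=
  joinCongGen (betaGen π)

/-- The setoid on the grid determined by `β_π`. -/
def betaSetoid {n : ℕ} (π : Equiv.Perm (Fin n)) : Setoid (Grid n) :=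
  ⟨beta π, joinCongGen_equivalence _⟩

/-- The quotient `G_n/β_π`. -/
def QuotGrid {n : ℕ} (π : Equiv.Perm (Fin n)) := Quotient (betaSetoid π)

/-- The order on `G_n/β_π`: `[a] ≤ [b]` iff `(a ⊔ b, b) ∈ β_π`. -/
instance QuotGrid.instLE {n : ℕ} (π : Equiv.Perm (Fin n)) : LE (QuotGrid π) :=
  ⟨fun x y => ∃ a b : Grid n,
    x = Quotient.mk (betaSetoid π) a ∧ y = Quotient.mk (betaSetoid π) b ∧ beta π (a ⊔ b) b⟩

-- AUX START
namespace SSLaux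
open Finset
variable {n : ℕ} (π : Equiv.Perm (Fin n))

instance instDecBetaGen (a b : Grid n) : Decidable (betaGen π a b) := by
  unfold betaGen; infer_instance

def Closed (p : Grid n) : Prop := ∀ a b : Grid n, betaGen π a b → a ≤ p → b ≤ p

instance instDecClosed : DecidablePred (Closed π) := fun p => by
  unfold Closed; infer_instance

lemma closed_top : Closed π (⊤ : Grid n) := fun _ _ _ _ => le_top

def CAbove (p : Grid n) : Finset (Grid n) := Finset.univ.filter fun q => Closed π q ∧ p ≤ q

lemma CAbove_nonempty (p : Grid n) : (CAbove π p).Nonempty :=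
  ⟨⊤, by simp [CAbove, closed_top, le_top]⟩

def gg (p : Grid n) : Grid n := (CAbove π p).inf' (CAbove_nonempty π p) id

lemma le_gg (p : Grid n) : p ≤ gg π p :=
  Finset.le_inf' _ _ fun q hq => ((Finset.mem_filter.mp hq).2).2

lemma gg_le {p q : Grid n} (hq : Closed π q) (h : p ≤ q) : gg π p ≤ q :=
  Finset.inf'_le _ (by simp [CAbove, hq, h])

lemma closed_gg (p : Grid n) : Closed π (gg π p) := by
  intro a b hab ha
  refine Finset.le_inf' _ _ fun q hq => ?_
  have h := Finset.mem_filter.mp hq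
  exact h.2.1 a b hab (ha.trans (Finset.inf'_le _ hq))

lemma gg_eq_self {p : Grid n} (h : Closed π p) : gg π p = p :=
  le_antisymm (gg_le π h le_rfl) (le_gg π p)

lemma gg_mono {p q : Grid n} (h : p ≤ q) : gg π p ≤ gg π q :=
  gg_le π (closed_gg π q) (h.trans (le_gg π q))

lemma gg_sup_left (p c : Grid n) : gg π (p ⊔ c) = gg π (gg π p ⊔ c) := by
  refine le_antisymm (gg_mono π (sup_le_sup_right (le_gg π p) c)) ?_
  refine gg_le π (closed_gg π _) (sup_le ?_ ?_)
  · exact gg_le π (closed_gg π _) (le_sup_left.trans (le_gg π _))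
  · exact le_sup_right.trans (le_gg π _)

lemma gg_sup_right (p c : Grid n) : gg π (c ⊔ p) = gg π (c ⊔ gg π p) := by
  rw [sup_comm c p, sup_comm c (gg π p)]; exact gg_sup_left π p c

lemma betaGen_le {a b : Grid n} (h : betaGen π a b) : a ≤ b := by
  obtain ⟨i, (⟨rfl, rfl⟩ | ⟨rfl, rfl⟩)⟩ := h
  · exact ⟨Fin.castSucc_le_succ i, le_rfl⟩
  · exact ⟨le_rfl, Fin.castSucc_le_succ _⟩

lemma beta_of_gen {a b : Grid n} (h : betaGen π a b) : beta π a b :=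
  fun _θ _hθ hR => hR a b h

lemma beta_refl (a : Grid n) : beta π a a := (joinCongGen_equivalence _).refl a
lemma beta_symm {a b : Grid n} (h : beta π a b) : beta π b a := (joinCongGen_equivalence _).symm h
lemma beta_trans {a b c : Grid n} (h : beta π a b) (h' : beta π b c) : beta π a c :=
  (joinCongGen_equivalence _).trans h h'

lemma beta_sup {a b : Grid n} (h : beta π a b) (c : Grid n) : beta π (a ⊔ c) (b ⊔ c) :=
  fun θ hθ hR => hθ.2 _ _ _ (h θ hθ hR)

lemma gg_eq_of_beta {a b : Grid n} (h : beta π a b) : gg π a = gg π b := by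
  refine h (fun a b => gg π a = gg π b) ⟨⟨fun _ => rfl, Eq.symm, Eq.trans⟩, ?_⟩ ?_
  · intro a b c hab
    rw [gg_sup_left, hab, ← gg_sup_left]
  · intro a b hab
    refine le_antisymm (gg_mono π (betaGen_le π hab)) ?_
    exact gg_le π (closed_gg π a) ((closed_gg π a) a b hab (le_gg π a))

end SSLaux

namespace SSLaux
open Finset
variable {n : ℕ} (π : Equiv.Perm (Fin n))

lemma not_closed_step {p : Grid n} (h : ¬ Closed π p) :
    ∃ a b : Grid n, betaGen π a b ∧ a ≤ p ∧ ¬ b ≤ p := by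
  unfold Closed at h; push_neg at h; exact h

lemma beta_gg_aux : ∀ (m : ℕ) (p : Grid n), (n - p.1.val) + (n - p.2.val) ≤ m →
    beta π p (gg π p) := by
  intro m
  induction m with
  | zero =>
    intro p hp
    have h1 : p.1.val ≤ n := Fin.is_le p.1
    have h2 : p.2.val ≤ n := Fin.is_le p.2
    have : p = ⊤ := by
      have : p.1.val = n ∧ p.2.val = n := by omega
      exact Prod.ext (Fin.ext (by simpa using this.1)) (Fin.ext (by simpa using this.2))
    rw [this, gg_eq_self π (closed_top π)]
    exact beta_refl π _
  | succ m ih =>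
    intro p hp
    by_cases h : Closed π p
    · rw [gg_eq_self π h]; exact beta_refl π _
    · obtain ⟨a, b, hab, hap, hbp⟩ := not_closed_step π h
      have h1 : beta π p (b ⊔ p) := by
        have := beta_sup π (beta_of_gen π hab) p
        rwa [sup_eq_right.mpr hap] at this
      have hgg : gg π (b ⊔ p) = gg π p := by
        refine le_antisymm (gg_le π (closed_gg π p) (sup_le ?_ (le_gg π p)))
          (gg_mono π le_sup_right)
        exact (closed_gg π p) a b hab (hap.trans (le_gg π p))
      have hlt : p < b ⊔ p := lt_of_le_of_ne le_sup_right (fun h' => hbp (h' ▸ le_sup_left))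
      have hm : (n - (b ⊔ p).1.val) + (n - (b ⊔ p).2.val) ≤ m := by
        have l1 : p.1.val ≤ (b ⊔ p).1.val := hlt.le.1
        have l2 : p.2.val ≤ (b ⊔ p).2.val := hlt.le.2
        have l3 : (b ⊔ p).1.val ≤ n := Fin.is_le _
        have l4 : (b ⊔ p).2.val ≤ n := Fin.is_le _
        have hne : p.1.val ≠ (b ⊔ p).1.val ∨ p.2.val ≠ (b ⊔ p).2.val := by
          by_contra hc
          push_neg at hc
          exact hlt.ne (Prod.ext (Fin.ext hc.1) (Fin.ext hc.2))
        rcases hne with hne | hne <;> omega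
      exact beta_trans π h1 (hgg ▸ ih (b ⊔ p) hm)

lemma beta_gg (p : Grid n) : beta π p (gg π p) :=
  beta_gg_aux π _ p le_rfl

lemma beta_iff {a b : Grid n} : beta π a b ↔ gg π a = gg π b := by
  constructor
  · exact gg_eq_of_beta π
  · intro h
    refine beta_trans π (beta_gg π a) ?_
    rw [h]
    exact beta_symm π (beta_gg π b)

-- combinatorial lemmas
lemma closed_snd_le {p : Grid n} (h : Closed π p) (hx : p.1.val < n) :
    p.2.val ≤ (π ⟨p.1.val, hx⟩).val := by
  by_contra hc
  push_neg at hc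
  have ha : (((⟨p.1.val, hx⟩ : Fin n).castSucc, (π ⟨p.1.val, hx⟩).succ) : Grid n) ≤ p := by
    refine ⟨?_, ?_⟩
    · rw [Fin.le_def]; simp
    · rw [Fin.le_def]; simpa using hc
  have hb := h _ _ ⟨⟨p.1.val, hx⟩, Or.inl ⟨rfl, rfl⟩⟩ ha
  have h2 := Fin.le_def.mp hb.1
  simp at h2
lemma closed_fst_le {p : Grid n} (h : Closed π p) (hy : p.2.val < n) :
    p.1.val ≤ (π.symm ⟨p.2.val, hy⟩).val := by
  by_contra hc
  push_neg at hc
  have hπi : π (π.symm ⟨p.2.val, hy⟩) = ⟨p.2.val, hy⟩ := Equiv.apply_symm_apply π _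
  have ha : (((π.symm ⟨p.2.val, hy⟩).succ, (π (π.symm ⟨p.2.val, hy⟩)).castSucc) : Grid n) ≤ p := by
    refine ⟨?_, ?_⟩
    · rw [Fin.le_def]; simpa using hc
    · rw [Fin.le_def]; simp [hπi]
  have hb := h _ _ ⟨π.symm ⟨p.2.val, hy⟩, Or.inr ⟨rfl, rfl⟩⟩ ha
  have h2 := Fin.le_def.mp hb.2
  rw [hπi] at h2
  simp at h2
lemma closed_diag (i : Fin n) : Closed π ((i.castSucc, (π i).castSucc) : Grid n) := by
  rintro a b ⟨j, (⟨rfl, rfl⟩ | ⟨rfl, rfl⟩)⟩ ha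
  · have h1 : j.val ≤ i.val := by simpa using Fin.le_def.mp ha.1
    have h2 : (π j).val + 1 ≤ (π i).val := by simpa using Fin.le_def.mp ha.2
    have hji : j.val ≠ i.val := fun h => by
      have : j = i := Fin.ext h
      subst this; omega
    refine ⟨?_, ha.2⟩
    rw [Fin.le_def]
    simp
    omega
  · have h1 : j.val + 1 ≤ i.val := by simpa using Fin.le_def.mp ha.1
    have h2 : (π j).val ≤ (π i).val := by simpa using Fin.le_def.mp ha.2
    have hne : (π j).val ≠ (π i).val := fun h => by
      have : j = i := π.injective (Fin.ext h)
      subst this; omega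
    refine ⟨ha.1, ?_⟩
    rw [Fin.le_def]
    simp
    omega
lemma val_sup (a b : Fin (n+1)) : (a ⊔ b).val = max a.val b.val := rfl

end SSLaux
namespace SSLaux
open Finset
variable {n : ℕ} (π : Equiv.Perm (Fin n))

lemma cover1 {p q : Grid n} (h1 : q.1.val = p.1.val + 1) (h2 : q.2 = p.2)
    {d : Grid n} (hd : Closed π d) (h3 : gg π p ≤ d) (h4 : d ≤ gg π q) :
    d = gg π p ∨ d = gg π q := by
  have hpq : p ≤ q := ⟨by rw [Fin.le_def]; omega, h2.ge⟩
  by_cases hq : q ≤ gg π p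
  · left
    have : gg π q ≤ gg π p := gg_le π (closed_gg π p) hq
    exact le_antisymm (h4.trans this) h3
  by_cases hqd : q ≤ d
  · right
    exact le_antisymm h4 (gg_le π hd hqd)
  -- gg p has first coord = p.1.val, and so does d
  have hgp2 : p.2.val ≤ (gg π p).2.val := Fin.le_def.mp (le_gg π p).2
  have hgp1 : (gg π p).1.val = p.1.val := by
    have hge := Fin.le_def.mp (le_gg π p).1
    by_contra hc
    exact hq ⟨by rw [Fin.le_def]; omega, h2 ▸ (le_gg π p).2⟩
  have hd2 : p.2.val ≤ d.2.val := hgp2.trans (Fin.le_def.mp h3.2)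
  have hd1 : d.1.val = p.1.val := by
    have hge : p.1.val ≤ d.1.val := hgp1 ▸ Fin.le_def.mp h3.1
    by_contra hc
    exact hqd ⟨by rw [Fin.le_def]; omega, h2 ▸ (by rw [Fin.le_def]; omega)⟩
  by_cases hdp : d = gg π p
  · left; exact hdp
  exfalso
  -- second coords
  have hy01 : (gg π p).2.val < d.2.val := by
    have hle := Fin.le_def.mp h3.2
    rcases lt_or_eq_of_le hle with h | h
    · exact h
    · exact absurd (le_antisymm (⟨by rw [Fin.le_def]; omega, by rw [Fin.le_def]; omega⟩ : d ≤ gg π p) h3) hdp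
  have hxn : p.1.val < n := by omega
  have hx' : d.1.val < n := by omega
  have hA : d.2.val ≤ (π ⟨d.1.val, hx'⟩).val := closed_snd_le π hd hx'
  have hyn : (gg π p).2.val < n := by
    have : (π ⟨d.1.val, hx'⟩).val < n := (π _).isLt
    omega
  have hB : (gg π p).1.val ≤ (π.symm ⟨(gg π p).2.val, hyn⟩).val :=
    closed_fst_le π (closed_gg π p) hyn
  -- strictness : π.symm y₀ ≠ p.1.val
  have hstrict : p.1.val < (π.symm ⟨(gg π p).2.val, hyn⟩).val := by
    rcases lt_or_eq_of_le (hgp1 ▸ hB) with h | h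
    · exact h
    · exfalso
      have hsym : π.symm ⟨(gg π p).2.val, hyn⟩ = ⟨p.1.val, hxn⟩ := Fin.ext h.symm
      have : π ⟨p.1.val, hxn⟩ = ⟨(gg π p).2.val, hyn⟩ := by
        rw [← hsym, Equiv.apply_symm_apply]
      have hv : (π ⟨p.1.val, hxn⟩).val = (gg π p).2.val := by rw [this]
      have : d.1.val = p.1.val := hd1
      have : (π ⟨d.1.val, hx'⟩) = π ⟨p.1.val, hxn⟩ := by congr 1; exact Fin.ext this
      rw [this, hv] at hA
      omega
  -- the diagonal element D
  set i0 : Fin n := π.symm ⟨(gg π p).2.val, hyn⟩ with hi0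
  have hD : Closed π ((i0.castSucc, (π i0).castSucc) : Grid n) := closed_diag π i0
  have hπi0 : (π i0).val = (gg π p).2.val := by
    rw [hi0, Equiv.apply_symm_apply]
  have hqD : q ≤ ((i0.castSucc, (π i0).castSucc) : Grid n) := by
    refine ⟨?_, ?_⟩
    · rw [Fin.le_def]; simpa using by omega
    · rw [Fin.le_def]
      have : q.2.val = p.2.val := by rw [h2]
      simp [hπi0]
      omega
  have : gg π q ≤ _ := gg_le π hD hqD
  have hc1 : (gg π q).2.val ≤ (π i0).val := Fin.le_def.mp this.2 |>.trans (by simp)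
  have hc2 : d.2.val ≤ (gg π q).2.val := Fin.le_def.mp h4.2
  omega

end SSLaux
namespace SSLaux
open Finset
variable {n : ℕ} (π : Equiv.Perm (Fin n))

lemma cover2 {p q : Grid n} (h1 : q.1 = p.1) (h2 : q.2.val = p.2.val + 1)
    {d : Grid n} (hd : Closed π d) (h3 : gg π p ≤ d) (h4 : d ≤ gg π q) :
    d = gg π p ∨ d = gg π q := by
  have hpq : p ≤ q := ⟨h1.ge, by rw [Fin.le_def]; omega⟩
  by_cases hq : q ≤ gg π p
  · left
    have : gg π q ≤ gg π p := gg_le π (closed_gg π p) hq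
    exact le_antisymm (h4.trans this) h3
  by_cases hqd : q ≤ d
  · right
    exact le_antisymm h4 (gg_le π hd hqd)
  have hgp1 : p.1.val ≤ (gg π p).1.val := Fin.le_def.mp (le_gg π p).1
  have hgp2 : (gg π p).2.val = p.2.val := by
    have hge := Fin.le_def.mp (le_gg π p).2
    by_contra hc
    exact hq ⟨h1 ▸ (le_gg π p).1, by rw [Fin.le_def]; omega⟩
  have hd1 : p.1.val ≤ d.1.val := hgp1.trans (Fin.le_def.mp h3.1)
  have hd2 : d.2.val = p.2.val := by
    have hge : p.2.val ≤ d.2.val := hgp2 ▸ Fin.le_def.mp h3.2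
    by_contra hc
    exact hqd ⟨h1 ▸ (by rw [Fin.le_def]; omega), by rw [Fin.le_def]; omega⟩
  by_cases hdp : d = gg π p
  · left; exact hdp
  exfalso
  have hx01 : (gg π p).1.val < d.1.val := by
    have hle := Fin.le_def.mp h3.1
    rcases lt_or_eq_of_le hle with h | h
    · exact h
    · exact absurd (le_antisymm (⟨by rw [Fin.le_def]; omega, by rw [Fin.le_def]; omega⟩ : d ≤ gg π p) h3) hdp
  have hyn : p.2.val < n := by
    have : q.2.val ≤ n := Fin.is_le q.2
    omega
  have hy' : d.2.val < n := by omega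
  have hB : d.1.val ≤ (π.symm ⟨d.2.val, hy'⟩).val := closed_fst_le π hd hy'
  have hxn : (gg π p).1.val < n := by
    have : (π.symm ⟨d.2.val, hy'⟩).val < n := (π.symm _).isLt
    omega
  have hA : (gg π p).2.val ≤ (π ⟨(gg π p).1.val, hxn⟩).val := closed_snd_le π (closed_gg π p) hxn
  have hstrict : p.2.val < (π ⟨(gg π p).1.val, hxn⟩).val := by
    rcases lt_or_eq_of_le (hgp2 ▸ hA) with h | h
    · exact h
    · exfalso
      have hsym : π ⟨(gg π p).1.val, hxn⟩ = ⟨p.2.val, hyn⟩ := Fin.ext h.symm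
      have hss : π.symm ⟨p.2.val, hyn⟩ = ⟨(gg π p).1.val, hxn⟩ := by
        rw [← hsym, Equiv.symm_apply_apply]
      have hdd : (⟨d.2.val, hy'⟩ : Fin n) = ⟨p.2.val, hyn⟩ := Fin.ext hd2
      rw [hdd, hss] at hB
      have hBB : d.1.val ≤ (gg π p).1.val := hB
      omega
  set i0 : Fin n := ⟨(gg π p).1.val, hxn⟩ with hi0
  have hD : Closed π ((i0.castSucc, (π i0).castSucc) : Grid n) := closed_diag π i0
  have hqD : q ≤ ((i0.castSucc, (π i0).castSucc) : Grid n) := by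
    refine ⟨?_, ?_⟩
    · rw [Fin.le_def]
      have : q.1.val = p.1.val := by rw [h1]
      simp [hi0]
      omega
    · rw [Fin.le_def]; simpa using by omega
  have hgq : gg π q ≤ _ := gg_le π hD hqD
  have hc1 : (gg π q).1.val ≤ i0.val := Fin.le_def.mp hgq.1 |>.trans (by simp)
  have hc2 : d.1.val ≤ (gg π q).1.val := Fin.le_def.mp h4.1
  have hc3 : (gg π q).1.val ≤ (gg π p).1.val := hc1
  omega

end SSLaux
namespace SSLaux
open Finset
variable {n : ℕ} (π : Equiv.Perm (Fin n))

lemma sup_step : ∀ (m : ℕ) (u v C : Grid n), u ≤ v →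
    (v.1.val - u.1.val) + (v.2.val - u.2.val) ≤ m →
    (∀ d : Grid n, Closed π d → gg π u ≤ d → d ≤ gg π v → d = gg π u ∨ d = gg π v) →
    ∀ d : Grid n, Closed π d → gg π (u ⊔ C) ≤ d → d ≤ gg π (v ⊔ C) →
      d = gg π (u ⊔ C) ∨ d = gg π (v ⊔ C) := by
  intro m
  induction m with
  | zero =>
    intro u v C huv hm _ d _ h5 h6
    have h1 : u.1.val = v.1.val := le_antisymm (Fin.le_def.mp huv.1) (by omega)
    have h2 : u.2.val = v.2.val := le_antisymm (Fin.le_def.mp huv.2) (by omega)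
    have : u = v := Prod.ext (Fin.ext h1) (Fin.ext h2)
    subst this
    exact Or.inl (le_antisymm h6 h5)
  | succ m ih =>
    intro u v C huv hm hint d hd h5 h6
    by_cases hguv : gg π u = gg π v
    · have heq : gg π (u ⊔ C) = gg π (v ⊔ C) := by
        rw [gg_sup_left π u C, hguv, ← gg_sup_left]
      rw [heq] at h5 ⊢
      exact Or.inl (le_antisymm h6 h5)
    have hne : u ≠ v := fun h => hguv (by rw [h])
    by_cases hx : u.1.val < v.1.val
    · -- step in first coordinate
      have hwlt : u.1.val + 1 < n + 1 := by
        have := v.1.isLt; omega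
      set w : Grid n := (⟨u.1.val + 1, hwlt⟩, u.2) with hw
      have huw : u ≤ w := ⟨by rw [Fin.le_def]; simp [hw], le_rfl⟩
      have hwv : w ≤ v := ⟨by rw [Fin.le_def]; simp [hw]; omega, huv.2⟩
      have hgw : gg π w = gg π u ∨ gg π w = gg π v :=
        hint (gg π w) (closed_gg π w) (gg_mono π huw) (gg_mono π hwv)
      rcases hgw with hgw | hgw
      · -- recurse on (w, v)
        have hint' : ∀ d : Grid n, Closed π d → gg π w ≤ d → d ≤ gg π v →
            d = gg π w ∨ d = gg π v := by
          intro d hd a b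
          have a' : gg π u ≤ d := by rw [← hgw]; exact a
          rcases hint d hd a' b with h | h
          · exact Or.inl (h.trans hgw.symm)
          · exact Or.inr h
        have hmw : (v.1.val - w.1.val) + (v.2.val - w.2.val) ≤ m := by
          have h1 : w.1.val = u.1.val + 1 := rfl
          have h2 : w.2.val = u.2.val := rfl
          omega
        have htr : gg π (w ⊔ C) = gg π (u ⊔ C) := by
          rw [gg_sup_left π w C, hgw, ← gg_sup_left]
        have h5' : gg π (w ⊔ C) ≤ d := by rw [htr]; exact h5
        rcases ih w v C hwv hmw hint' d hd h5' h6 with h | h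
        · exact Or.inl (h.trans htr)
        · exact Or.inr h
      · -- w is a cover of u with gg w = gg v
        have htr : gg π (w ⊔ C) = gg π (v ⊔ C) := by
          rw [gg_sup_left π w C, hgw, ← gg_sup_left]
        by_cases hCu : u.1.val + 1 ≤ C.1.val
        · have hwc : w ⊔ C = u ⊔ C := by
            refine Prod.ext (Fin.ext ?_) rfl
            have e1 : (w ⊔ C).1.val = max (u.1.val + 1) C.1.val := rfl
            have e2 : (u ⊔ C).1.val = max u.1.val C.1.val := rfl
            rw [e1, e2]; omega
          rw [← hwc, htr] at h5
          exact Or.inr (le_antisymm h6 h5)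
        · have e1 : (w ⊔ C).1.val = max (u.1.val + 1) C.1.val := rfl
          have e2 : (u ⊔ C).1.val = max u.1.val C.1.val := rfl
          have hc1 : (w ⊔ C).1.val = (u ⊔ C).1.val + 1 := by rw [e1, e2]; omega
          have hc2 : (w ⊔ C).2 = (u ⊔ C).2 := rfl
          have h6' : d ≤ gg π (w ⊔ C) := by rw [htr]; exact h6
          rcases cover1 π hc1 hc2 hd h5 h6' with h | h
          · exact Or.inl h
          · exact Or.inr (h.trans htr)
    · -- step in second coordinate
      have hxe : u.1.val = v.1.val := le_antisymm (Fin.le_def.mp huv.1) (by omega)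
      have hy : u.2.val < v.2.val := by
        rcases lt_or_eq_of_le (Fin.le_def.mp huv.2) with h | h
        · exact h
        · exact absurd (Prod.ext (Fin.ext hxe) (Fin.ext h)) hne
      have hwlt : u.2.val + 1 < n + 1 := by
        have := v.2.isLt; omega
      set w : Grid n := (u.1, ⟨u.2.val + 1, hwlt⟩) with hw
      have huw : u ≤ w := ⟨le_rfl, by rw [Fin.le_def]; simp [hw]⟩
      have hwv : w ≤ v := ⟨huv.1, by rw [Fin.le_def]; simp [hw]; omega⟩
      have hgw : gg π w = gg π u ∨ gg π w = gg π v :=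
        hint (gg π w) (closed_gg π w) (gg_mono π huw) (gg_mono π hwv)
      rcases hgw with hgw | hgw
      · have hint' : ∀ d : Grid n, Closed π d → gg π w ≤ d → d ≤ gg π v →
            d = gg π w ∨ d = gg π v := by
          intro d hd a b
          have a' : gg π u ≤ d := by rw [← hgw]; exact a
          rcases hint d hd a' b with h | h
          · exact Or.inl (h.trans hgw.symm)
          · exact Or.inr h
        have hmw : (v.1.val - w.1.val) + (v.2.val - w.2.val) ≤ m := by
          have h1 : w.1.val = u.1.val := rfl
          have h2 : w.2.val = u.2.val + 1 := rfl
          omega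
        have htr : gg π (w ⊔ C) = gg π (u ⊔ C) := by
          rw [gg_sup_left π w C, hgw, ← gg_sup_left]
        have h5' : gg π (w ⊔ C) ≤ d := by rw [htr]; exact h5
        rcases ih w v C hwv hmw hint' d hd h5' h6 with h | h
        · exact Or.inl (h.trans htr)
        · exact Or.inr h
      · have htr : gg π (w ⊔ C) = gg π (v ⊔ C) := by
          rw [gg_sup_left π w C, hgw, ← gg_sup_left]
        by_cases hCu : u.2.val + 1 ≤ C.2.val
        · have hwc : w ⊔ C = u ⊔ C := by
            refine Prod.ext rfl (Fin.ext ?_)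
            have e1 : (w ⊔ C).2.val = max (u.2.val + 1) C.2.val := rfl
            have e2 : (u ⊔ C).2.val = max u.2.val C.2.val := rfl
            rw [e1, e2]; omega
          rw [← hwc, htr] at h5
          exact Or.inr (le_antisymm h6 h5)
        · have e1 : (w ⊔ C).2.val = max (u.2.val + 1) C.2.val := rfl
          have e2 : (u ⊔ C).2.val = max u.2.val C.2.val := rfl
          have hc2 : (w ⊔ C).2.val = (u ⊔ C).2.val + 1 := by rw [e1, e2]; omega
          have hc1 : (w ⊔ C).1 = (u ⊔ C).1 := rfl
          have h6' : d ≤ gg π (w ⊔ C) := by rw [htr]; exact h6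
          rcases cover2 π hc1 hc2 hd h5 h6' with h | h
          · exact Or.inl h
          · exact Or.inr (h.trans htr)

end SSLaux
namespace SSLaux
open Finset
variable {n : ℕ} (π : Equiv.Perm (Fin n))

lemma closed_bot : Closed π (⊥ : Grid n) := by
  rintro a b ⟨i, (⟨rfl, rfl⟩ | ⟨rfl, rfl⟩)⟩ ha
  · exfalso
    have h1 := Fin.le_def.mp ha.2
    simp only [Fin.val_succ] at h1
    have h2 : ((⊥ : Grid n).2).val = 0 := rfl
    omega
  · exfalso
    have h1 := Fin.le_def.mp ha.1
    simp only [Fin.val_succ] at h1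
    have h2 : ((⊥ : Grid n).1).val = 0 := rfl
    omega

lemma closed_inf {p q : Grid n} (hp : Closed π p) (hq : Closed π q) : Closed π (p ⊓ q) :=
  fun a b hab ha =>
    le_inf (hp a b hab (ha.trans inf_le_left)) (hq a b hab (ha.trans inf_le_right))

abbrev Lsub := {q : Grid n // Closed π q}

instance : Lattice (Lsub π) :=
  { (inferInstance : PartialOrder (Lsub π)) with
    sup := fun A B => ⟨gg π (A.1 ⊔ B.1), closed_gg π _⟩
    le_sup_left := fun A B => show A.1 ≤ gg π (A.1 ⊔ B.1) from le_sup_left.trans (le_gg π _)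
    le_sup_right := fun A B => show B.1 ≤ gg π (A.1 ⊔ B.1) from le_sup_right.trans (le_gg π _)
    sup_le := fun A B C hAC hBC => show gg π (A.1 ⊔ B.1) ≤ C.1 from
      gg_le π C.2 (sup_le hAC hBC)
    inf := fun A B => ⟨A.1 ⊓ B.1, closed_inf π A.2 B.2⟩
    inf_le_left := fun A B => show A.1 ⊓ B.1 ≤ A.1 from inf_le_left
    inf_le_right := fun A B => show A.1 ⊓ B.1 ≤ B.1 from inf_le_right
    le_inf := fun A B C hAB hAC => show A.1 ≤ B.1 ⊓ C.1 from le_inf hAB hAC }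

noncomputable instance : BoundedOrder (Lsub π) where
  top := ⟨⊤, closed_top π⟩
  le_top := fun A => show A.1 ≤ ⊤ from le_top
  bot := ⟨⊥, closed_bot π⟩
  bot_le := fun A => show ⊥ ≤ A.1 from bot_le

instance : Fintype (Lsub π) := Subtype.fintype _

def theIso : QuotGrid π ≃o Lsub π where
  toFun := Quotient.lift (fun p => (⟨gg π p, closed_gg π p⟩ : Lsub π))
    (fun a b h => Subtype.ext (gg_eq_of_beta π h))
  invFun := fun A => Quotient.mk (betaSetoid π) A.1
  left_inv := by
    intro x
    refine Quotient.inductionOn x (fun p => ?_)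
    exact Quotient.sound (beta_symm π (beta_gg π p))
  right_inv := fun A => Subtype.ext (gg_eq_self π A.2)
  map_rel_iff' := by
    intro x y
    refine Quotient.inductionOn₂ x y (fun p q => ?_)
    constructor
    · intro h
      have h' : gg π p ≤ gg π q := h
      refine ⟨p, q, rfl, rfl, ?_⟩
      rw [beta_iff]
      have e1 : gg π (p ⊔ q) = gg π (gg π p ⊔ gg π q) :=
        (gg_sup_left π p q).trans (gg_sup_right π q (gg π p))
      rw [e1, sup_eq_right.mpr h', gg_eq_self π (closed_gg π q)]
    · rintro ⟨a, b, hxa, hyb, hab⟩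
      have h1 : beta π p a := Quotient.exact hxa
      have h2 : beta π q b := Quotient.exact hyb
      show gg π p ≤ gg π q
      calc gg π p = gg π a := gg_eq_of_beta π h1
        _ ≤ gg π (a ⊔ b) := gg_mono π le_sup_left
        _ = gg π b := gg_eq_of_beta π hab
        _ = gg π q := (gg_eq_of_beta π h2).symm

end SSLaux
namespace SSLaux
open Finset
variable {n : ℕ} (π : Equiv.Perm (Fin n))

noncomputable def colE (x : Fin (n+1)) : Lsub π := ⟨gg π ((x, ⊥) : Grid n), closed_gg π _⟩
noncomputable def rowE (y : Fin (n+1)) : Lsub π := ⟨gg π ((⊥, y) : Grid n), closed_gg π _⟩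

lemma decomp (A : Lsub π) : A = colE π A.1.1 ⊔ rowE π A.1.2 := by
  apply Subtype.ext
  show A.1 = gg π (gg π ((A.1.1, ⊥) : Grid n) ⊔ gg π ((⊥, A.1.2) : Grid n))
  rw [← gg_sup_right, ← gg_sup_left]
  have e : ((A.1.1, ⊥) : Grid n) ⊔ ((⊥, A.1.2) : Grid n) = A.1 := by
    refine Prod.ext ?_ ?_ <;> simp
  rw [e, gg_eq_self π A.2]

lemma col_le_col {x y : Fin (n+1)} (h : x ≤ y) : colE π x ≤ colE π y :=
  show gg π _ ≤ gg π _ from gg_mono π ⟨h, le_rfl⟩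

lemma row_le_row {x y : Fin (n+1)} (h : x ≤ y) : rowE π x ≤ rowE π y :=
  show gg π _ ≤ gg π _ from gg_mono π ⟨le_rfl, h⟩

lemma col_comp (x y : Fin (n+1)) : colE π x ≤ colE π y ∨ colE π y ≤ colE π x :=
  (le_total x y).imp (col_le_col π) (col_le_col π)

lemma row_comp (x y : Fin (n+1)) : rowE π x ≤ rowE π y ∨ rowE π y ≤ rowE π x :=
  (le_total x y).imp (row_le_row π) (row_le_row π)

lemma slim : Slim (Lsub π) := by
  rintro ⟨a, b, c, ha, hb, hc, h1, h2, h3, h4, h5, h6⟩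
  have da := ha.2 _ _ (decomp π a)
  have db := hb.2 _ _ (decomp π b)
  have dc := hc.2 _ _ (decomp π c)
  rcases da with da | da <;> rcases db with db | db <;> rcases dc with dc | dc
  · rw [da, db] at h1 h2
    rcases col_comp π a.1.1 b.1.1 with h | h
    · exact h1 h
    · exact h2 h
  · rw [da, db] at h1 h2
    rcases col_comp π a.1.1 b.1.1 with h | h
    · exact h1 h
    · exact h2 h
  · rw [da, dc] at h3 h4
    rcases col_comp π a.1.1 c.1.1 with h | h
    · exact h3 h
    · exact h4 h
  · rw [db, dc] at h5 h6
    rcases row_comp π b.1.2 c.1.2 with h | h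
    · exact h5 h
    · exact h6 h
  · rw [db, dc] at h5 h6
    rcases col_comp π b.1.1 c.1.1 with h | h
    · exact h5 h
    · exact h6 h
  · rw [da, dc] at h3 h4
    rcases row_comp π a.1.2 c.1.2 with h | h
    · exact h3 h
    · exact h4 h
  · rw [da, db] at h1 h2
    rcases row_comp π a.1.2 b.1.2 with h | h
    · exact h1 h
    · exact h2 h
  · rw [da, db] at h1 h2
    rcases row_comp π a.1.2 b.1.2 with h | h
    · exact h1 h
    · exact h2 h

lemma semimod : Semimodular (Lsub π) := by
  intro A B hcov
  have hlt : A ⊓ B < A := hcov.1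
  have hAB : ¬ A ≤ B := by
    intro h
    exact hlt.ne (by rw [inf_eq_left.mpr h])
  have hBlt : B < A ⊔ B := by
    refine lt_of_le_of_ne le_sup_right (fun h => hAB ?_)
    have : A ≤ A ⊔ B := le_sup_left
    rwa [← h] at this
  refine ⟨hBlt, fun c hc1 hc2 => ?_⟩
  have hu : Closed π ((A ⊓ B).1) := (A ⊓ B).2
  have hv : Closed π A.1 := A.2
  have hint : ∀ d : Grid n, Closed π d → gg π (A ⊓ B).1 ≤ d → d ≤ gg π A.1 →
      d = gg π (A ⊓ B).1 ∨ d = gg π A.1 := by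
    intro d hd hd1 hd2
    rw [gg_eq_self π hu] at hd1
    rw [gg_eq_self π hv] at hd2
    have h12 := hcov.2
    rcases lt_or_eq_of_le (show A ⊓ B ≤ ⟨d, hd⟩ from hd1) with h | h
    · rcases lt_or_eq_of_le (show (⟨d, hd⟩ : Lsub π) ≤ A from hd2) with h' | h'
      · exact absurd h' (h12 h)
      · right
        rw [gg_eq_self π hv]
        exact congrArg Subtype.val h'
    · left
      rw [gg_eq_self π hu]
      exact (congrArg Subtype.val h).symm
  have hm : ((A.1).1.val - ((A ⊓ B).1).1.val) + ((A.1).2.val - ((A ⊓ B).1).2.val) ≤ 2 * n + 2 := by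
    have := Fin.is_le (A.1).1
    have := Fin.is_le (A.1).2
    omega
  have key := sup_step π (2 * n + 2) (A ⊓ B).1 A.1 B.1 (show (A ⊓ B).1 ≤ A.1 from inf_le_left)
    hm hint c.1 c.2
  have hub : gg π ((A ⊓ B).1 ⊔ B.1) = B.1 := by
    rw [sup_eq_right.mpr (show (A ⊓ B).1 ≤ B.1 from inf_le_right), gg_eq_self π B.2]
  have hvb : gg π (A.1 ⊔ B.1) = (A ⊔ B).1 := rfl
  have hk1 : gg π ((A ⊓ B).1 ⊔ B.1) ≤ c.1 := by
    rw [hub]; exact hc1.le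
  have hk2 : c.1 ≤ gg π (A.1 ⊔ B.1) := hc2.le
  rcases key hk1 hk2 with h | h
  · rw [hub] at h
    exact hc1.ne' (Subtype.ext h)
  · exact hc2.ne (Subtype.ext h)

end SSLaux
namespace SSLaux
open Finset
variable {n : ℕ} (π : Equiv.Perm (Fin n))

def rk (p : Grid n) : ℕ :=
  (Finset.univ.filter fun i : Fin n => i.val < p.1.val ∨ (π i).val < p.2.val).card

lemma rk_le (p : Grid n) : rk π p ≤ n := by
  have := Finset.card_filter_le (Finset.univ : Finset (Fin n))
    (fun i : Fin n => i.val < p.1.val ∨ (π i).val < p.2.val)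
  simpa [rk] using this

lemma rk_step {p a b : Grid n} (hab : betaGen π a b) (hap : a ≤ p) (hbp : ¬ b ≤ p) :
    rk π (b ⊔ p) = rk π p := by
  obtain ⟨i, (⟨rfl, rfl⟩ | ⟨rfl, rfl⟩)⟩ := hab
  · have f1 : i.val ≤ p.1.val := by simpa using Fin.le_def.mp hap.1
    have f2 : (π i).val + 1 ≤ p.2.val := by simpa using Fin.le_def.mp hap.2
    have f3 : ¬ (i.val + 1 ≤ p.1.val) := by
      intro hc
      refine hbp ⟨?_, hap.2⟩
      rw [Fin.le_def]; simpa using hc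
    have e1 : (((i.succ, (π i).succ) : Grid n) ⊔ p).1.val = max (i.val + 1) p.1.val := rfl
    have e2 : (((i.succ, (π i).succ) : Grid n) ⊔ p).2.val = max ((π i).val + 1) p.2.val := rfl
    have hset : (Finset.univ.filter fun t : Fin n =>
          t.val < (((i.succ, (π i).succ) : Grid n) ⊔ p).1.val ∨
          (π t).val < (((i.succ, (π i).succ) : Grid n) ⊔ p).2.val) =
        (Finset.univ.filter fun t : Fin n => t.val < p.1.val ∨ (π t).val < p.2.val) := by
      refine Finset.filter_congr (fun t _ => ?_)
      rw [e1, e2]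
      constructor
      · rintro (h | h)
        · by_cases ht : t = i
          · subst ht; right; omega
          · have htv : t.val ≠ i.val := fun hh => ht (Fin.ext hh)
            left; omega
        · right; omega
      · rintro (h | h)
        · left; omega
        · right; omega
    rw [rk, rk, hset]
  · have f1 : i.val + 1 ≤ p.1.val := by simpa using Fin.le_def.mp hap.1
    have f2 : (π i).val ≤ p.2.val := by simpa using Fin.le_def.mp hap.2
    have f3 : ¬ ((π i).val + 1 ≤ p.2.val) := by
      intro hc
      refine hbp ⟨hap.1, ?_⟩
      rw [Fin.le_def]; simpa using hc
    have e1 : (((i.succ, (π i).succ) : Grid n) ⊔ p).1.val = max (i.val + 1) p.1.val := rfl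
    have e2 : (((i.succ, (π i).succ) : Grid n) ⊔ p).2.val = max ((π i).val + 1) p.2.val := rfl
    have hset : (Finset.univ.filter fun t : Fin n =>
          t.val < (((i.succ, (π i).succ) : Grid n) ⊔ p).1.val ∨
          (π t).val < (((i.succ, (π i).succ) : Grid n) ⊔ p).2.val) =
        (Finset.univ.filter fun t : Fin n => t.val < p.1.val ∨ (π t).val < p.2.val) := by
      refine Finset.filter_congr (fun t _ => ?_)
      rw [e1, e2]
      constructor
      · rintro (h | h)
        · left; omega
        · by_cases ht : t = i
          · subst ht; left; omega
          · have htv : (π t).val ≠ (π i).val := fun hh => ht (π.injective (Fin.ext hh))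
            right; omega
      · rintro (h | h)
        · left; omega
        · right; omega
    rw [rk, rk, hset]

lemma rk_gg_aux : ∀ (m : ℕ) (p : Grid n), (n - p.1.val) + (n - p.2.val) ≤ m →
    rk π (gg π p) = rk π p := by
  intro m
  induction m with
  | zero =>
    intro p hp
    have h1 : p.1.val ≤ n := Fin.is_le p.1
    have h2 : p.2.val ≤ n := Fin.is_le p.2
    have hh : p = ⊤ := by
      have : p.1.val = n ∧ p.2.val = n := by omega
      exact Prod.ext (Fin.ext (by simpa using this.1)) (Fin.ext (by simpa using this.2))
    rw [hh, gg_eq_self π (closed_top π)]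
  | succ m ih =>
    intro p hp
    by_cases h : Closed π p
    · rw [gg_eq_self π h]
    · obtain ⟨a, b, hab, hap, hbp⟩ := not_closed_step π h
      have hgg : gg π (b ⊔ p) = gg π p := by
        refine le_antisymm (gg_le π (closed_gg π p) (sup_le ?_ (le_gg π p)))
          (gg_mono π le_sup_right)
        exact (closed_gg π p) a b hab (hap.trans (le_gg π p))
      have hlt : p < b ⊔ p := lt_of_le_of_ne le_sup_right (fun h' => hbp (h' ▸ le_sup_left))
      have hm : (n - (b ⊔ p).1.val) + (n - (b ⊔ p).2.val) ≤ m := by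
        have l1 : p.1.val ≤ (b ⊔ p).1.val := hlt.le.1
        have l2 : p.2.val ≤ (b ⊔ p).2.val := hlt.le.2
        have l3 : (b ⊔ p).1.val ≤ n := Fin.is_le _
        have l4 : (b ⊔ p).2.val ≤ n := Fin.is_le _
        have hne : p.1.val ≠ (b ⊔ p).1.val ∨ p.2.val ≠ (b ⊔ p).2.val := by
          by_contra hc
          push_neg at hc
          exact hlt.ne (Prod.ext (Fin.ext hc.1) (Fin.ext hc.2))
        rcases hne with hne | hne <;> omega
      rw [← hgg, ih (b ⊔ p) hm, rk_step π hab hap hbp]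

lemma rk_gg (p : Grid n) : rk π (gg π p) = rk π p := rk_gg_aux π _ p le_rfl

lemma rk_strict {p q : Grid n} (hp : Closed π p) (hq : Closed π q) (hlt : p < q) :
    rk π p < rk π q := by
  have l1 : p.1.val ≤ q.1.val := Fin.le_def.mp hlt.le.1
  have l2 : p.2.val ≤ q.2.val := Fin.le_def.mp hlt.le.2
  by_cases hy : p.2.val < q.2.val
  · have hyn : p.2.val < n := by
      have := q.2.isLt
      have := hq  -- unused
      omega
    set i0 : Fin n := π.symm ⟨p.2.val, hyn⟩ with hi0
    have hπ : (π i0).val = p.2.val := by rw [hi0, Equiv.apply_symm_apply]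
    have hmemq : i0 ∈ Finset.univ.filter fun i : Fin n =>
        i.val < q.1.val ∨ (π i).val < q.2.val := by
      simp only [Finset.mem_filter, Finset.mem_univ, true_and]
      right; omega
    have hmemp : i0 ∉ Finset.univ.filter fun i : Fin n =>
        i.val < p.1.val ∨ (π i).val < p.2.val := by
      simp only [Finset.mem_filter, Finset.mem_univ, true_and]
      push_neg
      constructor
      · have := closed_fst_le π hp hyn
        omega
      · omega
    have hsub : (Finset.univ.filter fun i : Fin n =>
          i.val < p.1.val ∨ (π i).val < p.2.val) ⊆
        (Finset.univ.filter fun i : Fin n => i.val < q.1.val ∨ (π i).val < q.2.val) := by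
      intro t ht
      simp only [Finset.mem_filter, Finset.mem_univ, true_and] at ht ⊢
      rcases ht with h | h
      · left; omega
      · right; omega
    exact Finset.card_lt_card (((Finset.ssubset_iff_of_subset hsub).mpr ⟨_, hmemq, hmemp⟩))
  · have hye : p.2.val = q.2.val := by omega
    have hx : p.1.val < q.1.val := by
      rcases lt_or_eq_of_le l1 with h | h
      · exact h
      · exact absurd (Prod.ext (Fin.ext h) (Fin.ext hye)) hlt.ne
    have hxn : p.1.val < n := by
      have := q.1.isLt
      omega
    have hi0v : ((⟨p.1.val, hxn⟩ : Fin n)).val = p.1.val := rfl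
    have hmemq : (⟨p.1.val, hxn⟩ : Fin n) ∈ Finset.univ.filter fun i : Fin n =>
        i.val < q.1.val ∨ (π i).val < q.2.val := by
      simp only [Finset.mem_filter, Finset.mem_univ, true_and]
      left
      omega
    have hmemp : (⟨p.1.val, hxn⟩ : Fin n) ∉ Finset.univ.filter fun i : Fin n =>
        i.val < p.1.val ∨ (π i).val < p.2.val := by
      simp only [Finset.mem_filter, Finset.mem_univ, true_and]
      push_neg
      have hsnd := closed_snd_le π hp hxn
      constructor <;> omega
    have hsub : (Finset.univ.filter fun i : Fin n =>
          i.val < p.1.val ∨ (π i).val < p.2.val) ⊆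
        (Finset.univ.filter fun i : Fin n => i.val < q.1.val ∨ (π i).val < q.2.val) := by
      intro t ht
      simp only [Finset.mem_filter, Finset.mem_univ, true_and] at ht ⊢
      rcases ht with h | h
      · left; omega
      · right; omega
    exact Finset.card_lt_card (((Finset.ssubset_iff_of_subset hsub).mpr ⟨_, hmemq, hmemp⟩))

lemma card_filter_val_lt {v : ℕ} (hv : v ≤ n) :
    (Finset.univ.filter fun i : Fin n => i.val < v).card = v := by
  have hbij : (Finset.univ.filter fun i : Fin n => i.val < v).card = (Finset.range v).card := by
    apply Finset.card_bij (fun (i : Fin n) _ => i.val)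
    · intro i hi
      simp only [Finset.mem_filter] at hi
      simp [hi.2]
    · intro i hi j hj hij
      exact Fin.ext hij
    · intro j hj
      simp only [Finset.mem_range] at hj
      exact ⟨⟨j, lt_of_lt_of_le hj hv⟩, by simp [hj], rfl⟩
  rw [hbij, Finset.card_range]

lemma rk_col (v : Fin (n+1)) : rk π ((v, ⊥) : Grid n) = v.val := by
  rw [rk]
  have : (Finset.univ.filter fun i : Fin n =>
      i.val < ((v, (⊥ : Fin (n+1))) : Grid n).1.val ∨
      (π i).val < ((v, (⊥ : Fin (n+1))) : Grid n).2.val) =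
      (Finset.univ.filter fun i : Fin n => i.val < v.val) := by
    refine Finset.filter_congr (fun t _ => ?_)
    have hb : ((v, (⊥ : Fin (n+1))) : Grid n).2.val = 0 := rfl
    constructor
    · rintro (h | h)
      · exact h
      · omega
    · intro h; exact Or.inl h
  rw [this, card_filter_val_lt (Fin.is_le v)]

lemma haslen : HasLength (Lsub π) n := by
  constructor
  · refine ⟨fun v => ⟨gg π ((v, ⊥) : Grid n), closed_gg π _⟩, ?_⟩
    intro v w hvw
    have hle : gg π ((v, ⊥) : Grid n) ≤ gg π ((w, ⊥) : Grid n) :=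
      gg_mono π ⟨hvw.le, le_rfl⟩
    have hne : gg π ((v, ⊥) : Grid n) ≠ gg π ((w, ⊥) : Grid n) := by
      intro h
      have : rk π (gg π ((v, ⊥) : Grid n)) = rk π (gg π ((w, ⊥) : Grid n)) := by rw [h]
      rw [rk_gg, rk_gg, rk_col, rk_col] at this
      exact hvw.ne (Fin.ext this)
    exact lt_of_le_of_ne (show _ ≤ _ from hle) (fun h => hne (congrArg Subtype.val h))
  · intro m x hx
    have hf : StrictMono (fun k : Fin (m+1) => (⟨rk π (x k).1,
        lt_of_le_of_lt (rk_le π _) (Nat.lt_succ_self n)⟩ : Fin (n+1))) := by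
      intro k l hkl
      have hlt : x k < x l := hx hkl
      have hvlt : (x k).1 < (x l).1 :=
        lt_of_le_of_ne hlt.le (fun h => hlt.ne (Subtype.ext h))
      have := rk_strict π (x k).2 (x l).2 hvlt
      simpa [Fin.lt_def] using this
    have := Fintype.card_le_of_injective _ hf.injective
    simpa using this

end SSLaux

/-- for every permutation `π` of `{1,…,n}` (`n ≥ 1`), the quotient
`G_n/β_π` is a slim semimodular lattice of length `n`; that is, it is
order-isomorphic to one. -/
theorem quotGrid_slim_semimodular {n : ℕ} (hn : 1 ≤ n) (π : Equiv.Perm (Fin n)) :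
    ∃ (L : Type) (_ : Lattice L) (_ : Fintype L) (_ : BoundedOrder L),
      Slim L ∧ Semimodular L ∧ HasLength L n ∧ Nonempty (QuotGrid π ≃o L) :=
  ⟨SSLaux.Lsub π, inferInstance, inferInstance, inferInstance,
    SSLaux.slim π, SSLaux.semimod π, SSLaux.haslen π, ⟨SSLaux.theIso π⟩⟩
end

section
/- Let π be a permutation of {1,…,n} and k ∈ {1,…,n}. Then the pair (c_k, d_k) = ((k,0),(0,k)) belongs to β_π if and only if k is the largest element of the segment of π containing k. -/
/-- `I` is closed with respect to `σ`: `σ i ∈ I` for all `i ∈ I`. -/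
def PermClosed {n : ℕ} (σ : Equiv.Perm (Fin n)) (I : Set (Fin n)) : Prop :=
  ∀ i ∈ I, σ i ∈ I

/-- `I` is a section of `σ`: a nonempty interval `{u,…,v}` such that `I`, `{x | x < u}`
and `{x | v < x}` are all closed with respect to `σ`. -/
def IsSection {n : ℕ} (σ : Equiv.Perm (Fin n)) (I : Set (Fin n)) : Prop :=
  ∃ u v : Fin n, u ≤ v ∧ I = Set.Icc u v ∧
    PermClosed σ I ∧ PermClosed σ {x | x < u} ∧ PermClosed σ {x | v < x}

/-- `I` is a segment of `σ`: a section minimal with respect to inclusion. -/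
def IsSegment {n : ℕ} (σ : Equiv.Perm (Fin n)) (I : Set (Fin n)) : Prop :=
  IsSection σ I ∧ ∀ J : Set (Fin n), IsSection σ J → J ⊆ I → J = I

/-- `Seg σ`, the set of all segments of `σ`. -/
def Seg {n : ℕ} (σ : Equiv.Perm (Fin n)) : Set (Set (Fin n)) :=
  {I | IsSegment σ I}

/-- `σ` and `μ` are sectionally inverted or equal: they have the same segments and on
each segment `μ` coincides with `σ` or with `σ⁻¹`. -/
def Rho {n : ℕ} (σ μ : Equiv.Perm (Fin n)) : Prop :=
  Seg σ = Seg μ ∧ ∀ I ∈ Seg σ, (∀ i ∈ I, μ i = σ i) ∨ (∀ i ∈ I, μ i = σ⁻¹ i)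

section Aux

variable {n : ℕ} (π : Equiv.Perm (Fin n))

/-- `joinCongGen` is itself a join-congruence. -/
lemma joinCongGen_isJoinCong {S : Type*} [SemilatticeSup S] (R : S → S → Prop) :
    IsJoinCong (joinCongGen R) := by
  refine ⟨joinCongGen_equivalence R, ?_⟩
  intro a b c h θ hθ hR
  exact hθ.2 a b c (h θ hθ hR)

lemma beta_of_gen {a b : Grid n} (h : betaGen π a b) : beta π a b :=
  fun _θ _hθ hR => hR a b h

lemma beta_sup {a b : Grid n} (c : Grid n) (h : beta π a b) :
    beta π (a ⊔ c) (b ⊔ c) :=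
  (joinCongGen_isJoinCong _).2 a b c h

lemma beta_refl (a : Grid n) : beta π a a := (joinCongGen_equivalence _).refl a

lemma beta_symm {a b : Grid n} (h : beta π a b) : beta π b a :=
  (joinCongGen_equivalence _).symm h

lemma beta_trans {a b c : Grid n} (h₁ : beta π a b) (h₂ : beta π b c) : beta π a c :=
  (joinCongGen_equivalence _).trans h₁ h₂

/-- If `I` is closed under a permutation, so is its complement. -/
lemma permClosed_compl {I : Set (Fin n)} (h : PermClosed π I) : PermClosed π Iᶜ := by
  intro x hx
  intro hmem
  apply hx
  -- π restricted to I is injective, hence surjective (I finite)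
  have hsurj : Function.Surjective (fun y : I => (⟨π y, h y y.2⟩ : I)) := by
    apply Finite.surjective_of_injective
    intro y z hyz
    have : (π y : Fin n) = π z := congrArg Subtype.val hyz
    exact Subtype.ext (π.injective this)
  obtain ⟨y, hy⟩ := hsurj ⟨π x, hmem⟩
  have : (π y : Fin n) = π x := congrArg Subtype.val hy
  have := π.injective this
  rw [← this]; exact y.2

lemma permClosed_inv {I : Set (Fin n)} (h : PermClosed π I) : PermClosed π.symm I := by
  intro x hx
  have hsurj : Function.Surjective (fun y : I => (⟨π y, h y y.2⟩ : I)) := by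
    apply Finite.surjective_of_injective
    intro y z hyz
    have : (π y : Fin n) = π z := congrArg Subtype.val hyz
    exact Subtype.ext (π.injective this)
  obtain ⟨y, hy⟩ := hsurj ⟨x, hx⟩
  have : (π y : Fin n) = x := congrArg Subtype.val hy
  have : π.symm x = y := by rw [← this]; simp
  rw [this]; exact y.2

/-- Vertical step: `(r, j) ~ (r, j+1)` whenever `π⁻¹ j < r`. -/
lemma beta_vstep (j : Fin n) (r : Fin (n + 1)) (h : (π.symm j).succ ≤ r) :
    beta π (r, j.castSucc) (r, j.succ) := by
  have hg : betaGen π ((π.symm j).succ, ((π (π.symm j))).castSucc)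
      ((π.symm j).succ, (π (π.symm j)).succ) :=
    ⟨π.symm j, Or.inr ⟨rfl, rfl⟩⟩
  rw [Equiv.apply_symm_apply] at hg
  have h2 := beta_sup π (r, j.castSucc) (beta_of_gen π hg)
  have e1 : ((π.symm j).succ, j.castSucc) ⊔ (r, j.castSucc) = (r, j.castSucc) := by
    rw [Prod.mk_sup_mk, sup_eq_right.mpr h, sup_idem]
  have e2 : ((π.symm j).succ, j.succ) ⊔ (r, j.castSucc) = (r, j.succ) := by
    rw [Prod.mk_sup_mk, sup_eq_right.mpr h, sup_eq_left.mpr (Fin.castSucc_le_succ j)]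
  rwa [e1, e2] at h2

/-- Horizontal step: `(i, c) ~ (i+1, c)` whenever `π i < c`. -/
lemma beta_hstep (i : Fin n) (c : Fin (n + 1)) (h : (π i).succ ≤ c) :
    beta π (i.castSucc, c) (i.succ, c) := by
  have hg : betaGen π (i.castSucc, (π i).succ) (i.succ, (π i).succ) :=
    ⟨i, Or.inl ⟨rfl, rfl⟩⟩
  have h2 := beta_sup π ((0 : Fin (n + 1)), c) (beta_of_gen π hg)
  have e1 : (i.castSucc, (π i).succ) ⊔ ((0 : Fin (n + 1)), c) = (i.castSucc, c) := by
    rw [Prod.mk_sup_mk, sup_eq_left.mpr (Fin.zero_le _), sup_eq_right.mpr h]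
  have e2 : (i.succ, (π i).succ) ⊔ ((0 : Fin (n + 1)), c) = (i.succ, c) := by
    rw [Prod.mk_sup_mk, sup_eq_left.mpr (Fin.zero_le _), sup_eq_right.mpr h]
  rwa [e1, e2] at h2

/-- If `{0,…,k}` is closed, then `(k+1, 0) ~ (0, k+1)`. -/
lemma beta_of_closed (k : Fin n) (hk : PermClosed π (Set.Iic k)) :
    beta π (k.succ, (0 : Fin (n + 1))) ((0 : Fin (n + 1)), k.succ) := by
  have hinv := permClosed_inv π hk
  -- climb up the column k+1
  have up : ∀ m : ℕ, (hm : m ≤ k.val + 1) →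
      beta π (k.succ, (0 : Fin (n + 1)))
        (k.succ, ⟨m, by have := k.isLt; omega⟩) := by
    intro m
    induction m with
    | zero => intro _; exact beta_refl π _
    | succ m ih =>
      intro hm
      have hm' : m ≤ k.val + 1 := by omega
      have hmn : m < n := by have := k.isLt; omega
      refine beta_trans π (ih hm') ?_
      have hj : (π.symm ⟨m, hmn⟩).succ ≤ k.succ := by
        have : π.symm ⟨m, hmn⟩ ≤ k := hinv ⟨m, hmn⟩ (by
          show (⟨m, hmn⟩ : Fin n) ≤ k
          rw [Fin.le_def]; simpa using by omega)
        rw [Fin.le_def] at this ⊢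
        simpa using this
      have := beta_vstep π ⟨m, hmn⟩ k.succ hj
      have e1 : (⟨m, hmn⟩ : Fin n).castSucc = (⟨m, by have := k.isLt; omega⟩ : Fin (n+1)) := rfl
      have e2 : (⟨m, hmn⟩ : Fin n).succ = (⟨m + 1, by have := k.isLt; omega⟩ : Fin (n+1)) := rfl
      rw [e1, e2] at this
      exact this
  -- walk left along the row k+1
  have left : ∀ m : ℕ, (hm : m ≤ k.val + 1) →
      beta π (⟨m, by have := k.isLt; omega⟩, k.succ) (k.succ, k.succ) := by
    intro m hm
    -- descending induction: induct on k.val + 1 - m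
    have key : ∀ d : ℕ, ∀ m : ℕ, (hm : m ≤ k.val + 1) → k.val + 1 - m ≤ d →
        beta π (⟨m, by have := k.isLt; omega⟩, k.succ) (k.succ, k.succ) := by
      intro d
      induction d with
      | zero =>
        intro m hm hd
        have : m = k.val + 1 := by omega
        subst this
        have : (⟨k.val + 1, by have := k.isLt; omega⟩ : Fin (n+1)) = k.succ := rfl
        rw [this]; exact beta_refl π _
      | succ d ih =>
        intro m hm hd
        rcases Nat.lt_or_ge m (k.val + 1) with hlt | hge
        · have hmn : m < n := by have := k.isLt; omega
          have hi : (π ⟨m, hmn⟩).succ ≤ k.succ := by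
            have : π ⟨m, hmn⟩ ≤ k := hk ⟨m, hmn⟩ (by
              show (⟨m, hmn⟩ : Fin n) ≤ k
              rw [Fin.le_def]; simpa using by omega)
            rw [Fin.le_def] at this ⊢
            simpa using this
          have hstep := beta_hstep π ⟨m, hmn⟩ k.succ hi
          have e1 : (⟨m, hmn⟩ : Fin n).castSucc = (⟨m, by have := k.isLt; omega⟩ : Fin (n+1)) := rfl
          have e2 : (⟨m, hmn⟩ : Fin n).succ = (⟨m + 1, by have := k.isLt; omega⟩ : Fin (n+1)) := rfl
          rw [e1, e2] at hstep
          exact beta_trans π hstep (ih (m+1) (by omega) (by omega))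
        · have : m = k.val + 1 := by omega
          subst this
          have : (⟨k.val + 1, by have := k.isLt; omega⟩ : Fin (n+1)) = k.succ := rfl
          rw [this]; exact beta_refl π _
    exact key (k.val + 1 - m) m hm le_rfl
  have h1 := up (k.val + 1) le_rfl
  have e : (⟨k.val + 1, by have := k.isLt; omega⟩ : Fin (n+1)) = k.succ := rfl
  rw [e] at h1
  have h2 := left 0 (by omega)
  have e0 : (⟨0, by have := k.isLt; omega⟩ : Fin (n+1)) = 0 := rfl
  rw [e0] at h2
  exact beta_trans π h1 (beta_symm π h2)

/-- If `(k+1, 0) ~ (0, k+1)` then `{0,…,k}` is closed. -/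
lemma closed_of_beta (k : Fin n)
    (h : beta π (k.succ, (0 : Fin (n + 1))) ((0 : Fin (n + 1)), k.succ)) :
    PermClosed π (Set.Iic k) := by
  by_contra hc
  simp only [PermClosed, Set.mem_Iic, not_forall] at hc
  obtain ⟨x₀, hx₀, hπx₀⟩ := hc
  have hπk : k < π x₀ := lt_of_not_ge hπx₀
  set P : Grid n → Prop := fun a => a.1 ≤ x₀.castSucc ∧ a.2 ≤ (π x₀).castSucc with hP
  have hPsup : ∀ a c : Grid n, P (a ⊔ c) ↔ P a ∧ P c := by
    intro a c
    simp only [hP, Prod.fst_sup, Prod.snd_sup, sup_le_iff]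
    tauto
  have hθ : IsJoinCong (fun a b : Grid n => P a ↔ P b) := by
    refine ⟨⟨fun _ => Iff.rfl, Iff.symm, Iff.trans⟩, ?_⟩
    intro a b c hab
    rw [hPsup, hPsup, hab]
  have hgen : ∀ x y, betaGen π x y → (P x ↔ P y) := by
    rintro x y ⟨i, (⟨rfl, rfl⟩ | ⟨rfl, rfl⟩)⟩
    · constructor
      · rintro ⟨h1, h2⟩
        refine ⟨?_, h2⟩
        rw [Fin.le_def] at h1 h2 ⊢
        simp only [Fin.coe_castSucc, Fin.val_succ] at h1 h2 ⊢
        have hne : i ≠ x₀ := by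
          intro he; subst he; omega
        have : i.val ≠ x₀.val := fun he => hne (Fin.ext he)
        omega
      · rintro ⟨h1, h2⟩
        exact ⟨le_trans (by rw [Fin.le_def]; simp) h1, h2⟩
    · constructor
      · rintro ⟨h1, h2⟩
        refine ⟨h1, ?_⟩
        rw [Fin.le_def] at h1 h2 ⊢
        simp only [Fin.coe_castSucc, Fin.val_succ] at h1 h2 ⊢
        have hne : π i ≠ π x₀ := by
          intro he
          have : i = x₀ := π.injective he
          subst this; omega
        have : (π i).val ≠ (π x₀).val := fun he => hne (Fin.ext he)
        omega
      · rintro ⟨h1, h2⟩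
        exact ⟨h1, le_trans (by rw [Fin.le_def]; simp) h2⟩
  have hiff := h _ hθ hgen
  have hright : P ((0 : Fin (n + 1)), k.succ) := by
    constructor
    · exact Fin.zero_le _
    · rw [Fin.le_def]
      simp only [Fin.val_succ, Fin.coe_castSucc]
      exact hπk
  have hleft := hiff.mpr hright
  have : k.succ ≤ x₀.castSucc := hleft.1
  rw [Fin.le_def] at this
  simp only [Fin.val_succ, Fin.coe_castSucc] at this
  have : x₀ ≤ k := hx₀
  rw [Fin.le_def] at this
  omega

/-- `k` is the largest element of its segment iff `{0,…,k}` is closed. -/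
lemma segment_iff_closed (k : Fin n) :
    (∃ I : Set (Fin n), IsSegment π I ∧ k ∈ I ∧ ∀ j ∈ I, j ≤ k) ↔
      PermClosed π (Set.Iic k) := by
  constructor
  · rintro ⟨I, ⟨⟨u, v, huv, hIeq, hIcl, hucl, hvcl⟩, _⟩, hkI, hmax⟩
    have hvI : v ∈ I := by rw [hIeq]; exact ⟨huv, le_refl v⟩
    have hvk : v = k := le_antisymm (hmax v hvI) (by
      rw [hIeq] at hkI; exact hkI.2)
    subst hvk
    intro x hx
    rcases lt_or_ge x u with hxu | hux
    · have := hucl x hxu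
      exact le_trans (le_of_lt this) huv
    · have hxI : x ∈ I := by rw [hIeq]; exact ⟨hux, hx⟩
      have := hIcl x hxI
      rw [hIeq] at this
      exact this.2
  · intro hk
    classical
    -- find `u`: one more than the largest cut strictly below k, or 0
    obtain ⟨u, hu1, hu2, hu3⟩ :
        ∃ u : Fin n, (∀ x, x < u → π x < u) ∧
          (∀ c, c < k → PermClosed π (Set.Iic c) → c < u) ∧ u ≤ k := by
      by_cases hex : ∃ c, c < k ∧ PermClosed π (Set.Iic c)
      · obtain ⟨c₀, hc₀⟩ := hex
        obtain ⟨c, hc, hcmax⟩ := Set.Finite.exists_maximalFor id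
          {c : Fin n | c < k ∧ PermClosed π (Set.Iic c)} (Set.toFinite _) ⟨c₀, hc₀⟩
        have hmax' : ∀ c', c' < k → PermClosed π (Set.Iic c') → c' ≤ c := by
          intro c' h1 h2
          by_contra hlt
          have : c < c' := lt_of_not_ge hlt
          have := hcmax (j := c') ⟨h1, h2⟩ (le_of_lt this)
          simp only [id] at this
          exact absurd this (not_le_of_gt ‹c < c'›)
        refine ⟨⟨c.val + 1, by have := hc.1; rw [Fin.lt_def] at this; have := k.isLt; omega⟩,
          ?_, ?_, ?_⟩
        · intro x hx
          rw [Fin.lt_def] at hx ⊢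
          simp only at hx ⊢
          have hxc : x ≤ c := by rw [Fin.le_def]; omega
          have := hc.2 x hxc
          simp only [Set.mem_Iic, Fin.le_def] at this
          omega
        · intro c' h1 h2
          have := hmax' c' h1 h2
          rw [Fin.le_def] at this
          rw [Fin.lt_def]
          simp only
          omega
        · have := hc.1
          rw [Fin.lt_def] at this
          rw [Fin.le_def]
          simp only
          omega
      · refine ⟨⟨0, k.pos⟩, ?_, ?_, ?_⟩
        · intro x hx
          exact absurd hx (by rw [Fin.lt_def]; simp)
        · intro c h1 h2
          exact (hex ⟨c, h1, h2⟩).elim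
        · rw [Fin.le_def]; simp
    have hcompl : PermClosed π {x : Fin n | x < u}ᶜ := by
      apply permClosed_compl
      intro x hx
      exact hu1 x hx
    refine ⟨Set.Icc u k, ⟨⟨u, k, hu3, rfl, ?_, ?_, ?_⟩, ?_⟩, ⟨hu3, le_refl k⟩,
      fun j hj => hj.2⟩
    · -- Icc u k closed
      intro x hx
      constructor
      · have : x ∈ {x : Fin n | x < u}ᶜ := by
          simp only [Set.mem_compl_iff, Set.mem_setOf_eq, not_lt]
          exact hx.1
        have := hcompl x this
        simpa only [Set.mem_compl_iff, Set.mem_setOf_eq, not_lt] using this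
      · exact hk x hx.2
    · exact fun x hx => hu1 x hx
    · -- {x | k < x} closed
      have := permClosed_compl π hk
      intro x hx
      have hx' : x ∈ (Set.Iic k)ᶜ := by
        simp only [Set.mem_compl_iff, Set.mem_Iic, not_le]
        exact hx
      have := this x hx'
      simpa only [Set.mem_compl_iff, Set.mem_Iic, not_le, Set.mem_setOf_eq] using this
    · -- minimality
      rintro J ⟨a, b, hab, rfl, hJcl, hacl, hbcl⟩ hJI
      have haJ : a ∈ Set.Icc a b := ⟨le_refl a, hab⟩
      have hbJ : b ∈ Set.Icc a b := ⟨hab, le_refl b⟩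
      have hua : u ≤ a := (hJI haJ).1
      have hbk : b ≤ k := (hJI hbJ).2
      -- b is a cut
      have hbcut : PermClosed π (Set.Iic b) := by
        intro x hx
        rcases lt_or_ge x a with hxa | hax
        · exact le_trans (le_of_lt (hacl x hxa)) hab
        · exact (hJcl x ⟨hax, hx⟩).2
      have hbk' : b = k := by
        by_contra hne
        have hblt : b < k := lt_of_le_of_ne hbk hne
        have := hu2 b hblt hbcut
        exact absurd (le_trans hua hab) (not_le_of_gt this)
      -- a = u
      have hau : a = u := by
        by_contra hne
        have hult : u < a := lt_of_le_of_ne hua (Ne.symm hne)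
        have hapos : 0 < a.val := by
          rw [Fin.lt_def] at hult; omega
        set c : Fin n := ⟨a.val - 1, by have := a.isLt; omega⟩ with hcdef
        have hc1 : PermClosed π (Set.Iic c) := by
          intro x hx
          have hxa : x < a := by
            simp only [Set.mem_Iic, Fin.le_def, hcdef] at hx
            rw [Fin.lt_def]
            omega
          have := hacl x hxa
          simp only [Set.mem_setOf_eq, Fin.lt_def] at this
          simp only [Set.mem_Iic, Fin.le_def, hcdef]
          omega
        have hck : c < k := by
          rw [Fin.lt_def]
          have hak : a ≤ k := le_trans hab hbk
          rw [Fin.le_def] at hak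
          simp only [hcdef]
          omega
        have := hu2 c hck hc1
        rw [Fin.lt_def] at this hult
        simp only [hcdef] at this
        omega
      subst hau hbk'
      rfl

end Aux


/-- `(c_k, d_k) = ((k,0),(0,k)) ∈ β_π` iff `k` is the largest element
of the segment of `π` containing `k`.  (Here `k : Fin n` represents the element
`k+1 ∈ {1,…,n}`, whose grid coordinate is `k.succ`.) -/
theorem beta_ck_dk_iff_largest_in_segment {n : ℕ} (π : Equiv.Perm (Fin n)) (k : Fin n) :
    beta π (k.succ, (0 : Fin (n + 1))) ((0 : Fin (n + 1)), k.succ) ↔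
      ∃ I : Set (Fin n), IsSegment π I ∧ k ∈ I ∧ ∀ j ∈ I, j ≤ k :=
  ⟨fun h => (segment_iff_closed π k).mpr (closed_of_beta π k h),
   fun h => beta_of_closed π k ((segment_iff_closed π k).mp h)⟩
end

section
/- Let π be a permutation of {1,…,n} and i, j ∈ {1,…,n}. Then the 4-cell [(i−1,j−1),(i,j)] of G_n is a source cell of β_π if and only if j = π(i). -/
/-- The 4-cell `[(i−1,j−1),(i,j)]` is a source cell of `θ`: both upper edges are
collapsed but the long diagonal is not. -/
def SourceCell {n : ℕ} (θ : Grid n → Grid n → Prop) (i j : Fin n) : Prop :=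
  θ (i.castSucc, j.succ) (i.succ, j.succ) ∧
  θ (i.succ, j.castSucc) (i.succ, j.succ) ∧
  ¬ θ (i.castSucc, j.castSucc) (i.succ, j.succ)

-- auxiliary congruence
def thetaPQ {n : ℕ} (p q : Fin (n+1)) : Grid n → Grid n → Prop :=
  fun a b => (p ≤ a.1 ∨ q ≤ a.2) ↔ (p ≤ b.1 ∨ q ≤ b.2)

lemma thetaPQ_cong {n : ℕ} (p q : Fin (n+1)) : IsJoinCong (thetaPQ (n := n) p q) := by
  refine ⟨⟨fun _ => Iff.rfl, fun h => h.symm, fun h1 h2 => h1.trans h2⟩, ?_⟩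
  intro a b c h
  have e : ∀ x y : Grid n, (p ≤ x.1 ⊔ y.1 ∨ q ≤ x.2 ⊔ y.2) ↔
      ((p ≤ x.1 ∨ q ≤ x.2) ∨ (p ≤ y.1 ∨ q ≤ y.2)) := by
    intro x y; simp [le_sup_iff]; tauto
  show (p ≤ a.1 ⊔ c.1 ∨ q ≤ a.2 ⊔ c.2) ↔ (p ≤ b.1 ⊔ c.1 ∨ q ≤ b.2 ⊔ c.2)
  rw [e, e]
  exact or_congr (h : _ ↔ _) Iff.rfl

lemma thetaPQ_gen {n : ℕ} (π : Equiv.Perm (Fin n)) (m : Fin n) :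
    ∀ x y, betaGen π x y → thetaPQ m.succ (π m).succ x y := by
  rintro x y ⟨k, (⟨rfl, rfl⟩ | ⟨rfl, rfl⟩)⟩ <;>
    unfold thetaPQ <;>
    by_cases hmk : m = k
  · subst hmk
    simp [Fin.succ_le_castSucc_iff]
  · have h1 : m.succ ≤ k.castSucc ↔ m.succ ≤ k.succ := by
      rw [Fin.succ_le_castSucc_iff, Fin.succ_le_succ_iff]
      constructor
      · exact le_of_lt
      · exact fun h => lt_of_le_of_ne h hmk
    simp [h1]
  · subst hmk; simp
  · have h2 : (π m).succ ≤ (π k).castSucc ↔ (π m).succ ≤ (π k).succ := by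
      rw [Fin.succ_le_castSucc_iff, Fin.succ_le_succ_iff]
      constructor
      · exact le_of_lt
      · refine fun h => lt_of_le_of_ne h fun he => hmk (π.injective he)
    simp [h2]

lemma beta_hedge {n : ℕ} (π : Equiv.Perm (Fin n)) (k : Fin n) (y : Fin (n+1))
    (hy : (π k).succ ≤ y) : beta π (k.castSucc, y) (k.succ, y) := by
  intro θ hθ hR
  have hg : θ (k.castSucc, (π k).succ) (k.succ, (π k).succ) :=
    hR _ _ ⟨k, Or.inl ⟨rfl, rfl⟩⟩
  have h2 := hθ.2 _ _ (k.castSucc, y) hg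
  have e1 : ((k.castSucc, (π k).succ) : Grid n) ⊔ (k.castSucc, y) = (k.castSucc, y) := by
    show (_ ⊔ _, _ ⊔ _) = _
    rw [sup_idem, sup_eq_right.mpr hy]
  have e2 : ((k.succ, (π k).succ) : Grid n) ⊔ (k.castSucc, y) = (k.succ, y) := by
    show (_ ⊔ _, _ ⊔ _) = _
    rw [sup_eq_left.mpr (Fin.castSucc_le_succ k), sup_eq_right.mpr hy]
  rwa [e1, e2] at h2

lemma beta_vedge {n : ℕ} (π : Equiv.Perm (Fin n)) (k : Fin n) (x : Fin (n+1))
    (hx : k.succ ≤ x) : beta π (x, (π k).castSucc) (x, (π k).succ) := by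
  intro θ hθ hR
  have hg : θ (k.succ, (π k).castSucc) (k.succ, (π k).succ) :=
    hR _ _ ⟨k, Or.inr ⟨rfl, rfl⟩⟩
  have h2 := hθ.2 _ _ (x, (π k).castSucc) hg
  have e1 : ((k.succ, (π k).castSucc) : Grid n) ⊔ (x, (π k).castSucc) = (x, (π k).castSucc) := by
    show (_ ⊔ _, _ ⊔ _) = _
    rw [sup_eq_right.mpr hx, sup_idem]
  have e2 : ((k.succ, (π k).succ) : Grid n) ⊔ (x, (π k).castSucc) = (x, (π k).succ) := by
    show (_ ⊔ _, _ ⊔ _) = _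
    rw [sup_eq_right.mpr hx, sup_eq_left.mpr (Fin.castSucc_le_succ _)]
  rwa [e1, e2] at h2

/-- the 4-cell `[(i−1,j−1),(i,j)]` of `G_n` is a source cell of `β_π`
iff `j = π i`. -/
theorem sourceCell_beta_iff {n : ℕ} (π : Equiv.Perm (Fin n)) (i j : Fin n) :
    SourceCell (beta π) i j ↔ j = π i := by
  constructor
  · rintro ⟨h1, h2, h3⟩
    by_contra hne
    rcases lt_trichotomy j (π i) with hlt | heq | hgt
    · -- top horizontal edge cannot be collapsed
      have := h1 _ (thetaPQ_cong i.succ (π i).succ) (thetaPQ_gen π i)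
      unfold thetaPQ at this
      rcases this.mpr (Or.inl le_rfl) with h | h
      · exact absurd (Fin.succ_le_castSucc_iff.mp h) (lt_irrefl i)
      · exact absurd (Fin.succ_le_succ_iff.mp h) (not_le.mpr hlt)
    · exact hne heq
    · rcases lt_or_ge i (π.symm j) with hlt2 | hle2
      · -- right vertical edge cannot be collapsed
        have := h2 _ (thetaPQ_cong (π.symm j).succ (π (π.symm j)).succ)
          (thetaPQ_gen π (π.symm j))
        rw [Equiv.apply_symm_apply] at this
        unfold thetaPQ at this
        rcases this.mpr (Or.inr le_rfl) with h | h
        · exact absurd (Fin.succ_le_succ_iff.mp h) (not_le.mpr hlt2)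
        · exact absurd (Fin.succ_le_castSucc_iff.mp h) (lt_irrefl j)
      · -- the diagonal is collapsed
        have hlt3 : π.symm j < i := by
          refine lt_of_le_of_ne hle2 fun he => hne ?_
          rw [← he, Equiv.apply_symm_apply]
        apply h3
        have s1 : beta π (i.castSucc, j.castSucc) (i.succ, j.castSucc) := by
          have := beta_hedge π i j.castSucc (Fin.succ_le_castSucc_iff.mpr hgt)
          exact this
        have s2 : beta π (i.succ, j.castSucc) (i.succ, j.succ) := by
          have := beta_vedge π (π.symm j) i.succ
            (Fin.succ_le_succ_iff.mpr hle2)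
          rwa [Equiv.apply_symm_apply] at this
        exact fun θ hθ hR => hθ.1.trans (s1 θ hθ hR) (s2 θ hθ hR)
  · rintro rfl
    refine ⟨fun θ hθ hR => hR _ _ ⟨i, Or.inl ⟨rfl, rfl⟩⟩,
      fun θ hθ hR => hR _ _ ⟨i, Or.inr ⟨rfl, rfl⟩⟩, fun h => ?_⟩
    have := h _ (thetaPQ_cong i.succ (π i).succ) (thetaPQ_gen π i)
    unfold thetaPQ at this
    rcases this.mpr (Or.inl le_rfl) with h | h
    · exact absurd (Fin.succ_le_castSucc_iff.mp h) (lt_irrefl i)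
    · exact absurd (Fin.succ_le_castSucc_iff.mp h) (lt_irrefl (π i))
end

section
/- Let M be a finite slim semimodular lattice and let U and V be maximal chains of M such that every join-irreducible element of M belongs to U ∪ V. Then U ∩ V equals the set of narrows of M, i.e., U ∩ V = {z ∈ M : z is comparable with every element of M}. -/

private lemma le_of_joinIrred_le {M : Type*} [Lattice M] [Fintype M] [OrderBot M]
    (x : M) : ∀ z : M, (∀ p : M, JoinIrred p → p ≤ x → p ≤ z) → x ≤ z := by
  induction x using WellFoundedLT.induction with
  | ind x ih =>
    intro z h
    by_cases hx : x = ⊥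
    · simp [hx]
    by_cases hj : JoinIrred x
    · exact h x hj le_rfl
    · have hd : ∃ a b : M, x = a ⊔ b ∧ x ≠ a ∧ x ≠ b := by
        unfold JoinIrred at hj; push_neg at hj
        exact hj hx
      obtain ⟨a, b, hab, ha, hb⟩ := hd
      have hax : a < x := lt_of_le_of_ne (hab ▸ le_sup_left) (Ne.symm ha)
      have hbx : b < x := lt_of_le_of_ne (hab ▸ le_sup_right) (Ne.symm hb)
      have h1 : a ≤ z := ih a hax z (fun p hp hpa => h p hp (hpa.trans hax.le))
      have h2 : b ≤ z := ih b hbx z (fun p hp hpb => h p hp (hpb.trans hbx.le))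
      exact hab ▸ sup_le h1 h2

private lemma mem_of_maxChain {M : Type*} [Lattice M] {U : Set M}
    (hU : IsMaxChain (· ≤ ·) U) {z : M} (hz : ∀ x : M, z ≤ x ∨ x ≤ z) : z ∈ U := by
  have hch : IsChain (· ≤ ·) (insert z U) :=
    hU.1.insert (fun b _ _ => hz b)
  have := hU.2 hch (Set.subset_insert z U)
  rw [this]
  exact Set.mem_insert z U

/-- if `U` and `V` are maximal chains of a finite slim semimodular
lattice `M` containing all join-irreducible elements, then `U ∩ V` is exactly the
set of narrows of `M` (elements comparable with every element of `M`). -/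
theorem maxChain_inter_eq_narrows
    {M : Type*} [Lattice M] [Fintype M] [BoundedOrder M]
    (hS : Slim M) (hM : Semimodular M) (U V : Set M)
    (hU : IsMaxChain (· ≤ ·) U) (hV : IsMaxChain (· ≤ ·) V)
    (hJ : ∀ p : M, JoinIrred p → p ∈ U ∪ V) :
    U ∩ V = {z : M | ∀ x : M, z ≤ x ∨ x ≤ z} := by
  ext z
  constructor
  · rintro ⟨hzU, hzV⟩ x
    by_cases hc : ∀ p : M, JoinIrred p → p ≤ x → p ≤ z
    · exact Or.inr (le_of_joinIrred_le x z hc)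
    · push_neg at hc
      obtain ⟨p, hp, hpx, hpz⟩ := hc
      left
      rcases hJ p hp with hpU | hpV
      · rcases hU.1 hzU hpU (fun h => hpz (h ▸ le_rfl)) with h | h
        · exact h.trans hpx
        · exact absurd h hpz
      · rcases hV.1 hzV hpV (fun h => hpz (h ▸ le_rfl)) with h | h
        · exact h.trans hpx
        · exact absurd h hpz
  · intro hz
    exact ⟨mem_of_maxChain hU hz, mem_of_maxChain hV hz⟩
end
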